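/- arXiv:1207.1838 — 6 statements merged into one kernel-verified Lean document; each statement's English description precedes it below -/
import Mathlib

section
/- For every two integers n and k with 2 ≤ k ≤ n, the generalized k-connectivity of the complete graph K_n equals n − ⌈k/2⌉. -/
open SimpleGraph
open scoped Classical

/-- An `S`-Steiner tree in `G`: a subgraph of `G` which is a tree and contains `S`. -/
def IsSteinerTree {V : Type*} (G : SimpleGraph V) (S : Set V) (T : G.Subgraph) : Prop :=
  S ⊆ T.verts ∧ T.coe.IsTree

/-- The generalized local connectivity `κ_G(S)`: the maximum number of pairwise
internally disjoint `S`-Steiner trees in `G`. -/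
noncomputable def steinerKappa {V : Type*} (G : SimpleGraph V) (S : Set V) : ℕ :=
  sSup {n | ∃ T : Fin n → G.Subgraph, (∀ i, IsSteinerTree G S (T i)) ∧
    ∀ i j, i ≠ j → (T i).edgeSet ∩ (T j).edgeSet = ∅ ∧ (T i).verts ∩ (T j).verts = S}

/-- The generalized local edge-connectivity `λ_G(S)`: the maximum number of pairwise
edge-disjoint `S`-Steiner trees in `G`. -/
noncomputable def steinerLambda {V : Type*} (G : SimpleGraph V) (S : Set V) : ℕ :=
  sSup {n | ∃ T : Fin n → G.Subgraph, (∀ i, IsSteinerTree G S (T i)) ∧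
    ∀ i j, i ≠ j → (T i).edgeSet ∩ (T j).edgeSet = ∅}

/-- The generalized `k`-connectivity `κ_k(G)` (with the convention that it is `0`
for a disconnected graph). -/
noncomputable def genKappa {V : Type*} [Fintype V] (G : SimpleGraph V) (k : ℕ) : ℕ :=
  if G.Connected then sInf {m | ∃ S : Finset V, S.card = k ∧ steinerKappa G ↑S = m} else 0

/-- The generalized `k`-edge-connectivity `λ_k(G)` (with the convention that it is `0`
for a disconnected graph). -/
noncomputable def genLambda {V : Type*} [Fintype V] (G : SimpleGraph V) (k : ℕ) : ℕ :=
  if G.Connected then sInf {m | ∃ S : Finset V, S.card = k ∧ steinerLambda G ↑S = m} else 0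

/-- The edge-connectivity `λ(G)`: the minimum number of edges whose removal disconnects `G`. -/
noncomputable def edgeConn {V : Type*} [Fintype V] (G : SimpleGraph V) : ℕ :=
  sInf {m | ∃ F : Set (Sym2 V), F ⊆ G.edgeSet ∧ F.ncard = m ∧ ¬ (G.deleteEdges F).Connected}

/-- The vertex connectivity `κ(G)`: the minimum size of a vertex set whose removal
disconnects `G` or leaves at most one vertex. -/
noncomputable def vertexConn {V : Type*} [Fintype V] (G : SimpleGraph V) : ℕ :=
  sInf {m | ∃ S : Finset V, S.card = m ∧
    (¬ (G.induce ((↑S : Set V)ᶜ)).Connected ∨ Fintype.card V ≤ m + 1)}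


lemma cycle_two_nbrs {V : Type*} {G : SimpleGraph V} {x : V} (c : G.Walk x x) (hc : c.IsCycle) :
    ∃ a b, a ≠ b ∧ G.Adj x a ∧ G.Adj x b := by
  have h3 := hc.three_le_length
  cases c with
  | nil => exact absurd hc Walk.IsCycle.not_of_nil
  | @cons _ a _ h p =>
    rw [Walk.cons_isCycle_iff] at hc
    obtain ⟨b, hadj, q, hq⟩ := Walk.exists_eq_cons_of_ne h.ne p.reverse
    refine ⟨a, b, ?_, h, hadj⟩
    rintro rfl
    have hqp : q.IsPath := by
      have h2 := hc.1.reverse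
      rw [hq] at h2
      exact h2.of_cons
    have hnil : q = Walk.nil := (Walk.isPath_iff_eq_nil (p := q)).mp hqp
    have hl : p.reverse.length = 1 := by rw [hq, hnil]; simp
    simp only [Walk.length_reverse] at hl
    simp only [Walk.length_cons] at h3
    omega

lemma acyclic_of_two_hubs {V : Type*} {G : SimpleGraph V} (r s : V)
    (h : ∀ v, v ≠ r → v ≠ s → ∀ a b, G.Adj v a → G.Adj v b → a = b) : G.IsAcyclic := by
  intro v c hc
  have h3 := hc.three_le_length
  have hnodup : c.support.tail.Nodup := hc.2
  have hlen : c.support.tail.length = c.length := by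
    have := Walk.length_support c
    simp only [List.length_tail, this]
    omega
  have hex : ∃ x ∈ c.support.tail, x ≠ r ∧ x ≠ s := by
    by_contra hx
    push_neg at hx
    have hsub : c.support.tail.toFinset ⊆ {r, s} := by
      intro y hy
      rw [List.mem_toFinset] at hy
      rcases eq_or_ne y r with h1 | h1
      · simp [h1]
      · simp [hx y hy h1]
    have h1 : c.support.tail.toFinset.card = c.support.tail.length :=
      List.toFinset_card_of_nodup hnodup
    have h2 := Finset.card_le_card hsub
    have h4 : ({r, s} : Finset V).card ≤ 2 := Finset.card_insert_le _ _ |>.trans (by simp)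
    omega
  obtain ⟨x, hxmem, hxr, hxs⟩ := hex
  have hxsup : x ∈ c.support := List.mem_of_mem_tail hxmem
  obtain ⟨a, b, hab, ha, hb⟩ := cycle_two_nbrs (c.rotate x hxsup) (hc.rotate hxsup)
  exact hab (h x hxr hxs a b ha hb)


def cfun (j x : ℕ) : ℕ := if x / 2 < j then 2 * j + x % 2 else 2 * j + 1 - x % 2

def Rnat (j x y : ℕ) : Prop :=
  (x = 2 * j ∧ y = 2 * j + 1) ∨ (x = 2 * j + 1 ∧ y = 2 * j) ∨
  (x ≠ 2 * j ∧ x ≠ 2 * j + 1 ∧ y = cfun j x) ∨ (y ≠ 2 * j ∧ y ≠ 2 * j + 1 ∧ x = cfun j y)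

lemma cfun_lt {j x k : ℕ} (hj : j < k / 2) : cfun j x < k := by
  unfold cfun; split_ifs <;> omega

lemma cfun_cases (j x : ℕ) : cfun j x = 2 * j ∨ cfun j x = 2 * j + 1 := by
  unfold cfun; split_ifs <;> omega

lemma Rnat_symm {j x y : ℕ} (h : Rnat j x y) : Rnat j y x := by
  unfold Rnat at *; tauto

lemma Rnat_ne {j x y : ℕ} (h : Rnat j x y) : x ≠ y := by
  unfold Rnat cfun at h; split_ifs at h <;> omega

lemma Rnat_disj {j j' x y : ℕ} (h : Rnat j x y) (h' : Rnat j' x y) : j = j' := by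
  unfold Rnat cfun at *; split_ifs at * <;> omega

lemma Rnat_unique {j x y : ℕ} (hx0 : x ≠ 2 * j) (hx1 : x ≠ 2 * j + 1) (h : Rnat j x y) :
    y = cfun j x := by
  unfold Rnat cfun at *; split_ifs at * <;> omega

lemma Rnat_center {j : ℕ} : Rnat j (2 * j) (2 * j + 1) := by unfold Rnat; omega

lemma Rnat_cfun {j x : ℕ} (hx0 : x ≠ 2 * j) (hx1 : x ≠ 2 * j + 1) : Rnat j x (cfun j x) := by
  unfold Rnat; tauto

variable {n k : ℕ}

def starSub (S : Finset (Fin n)) (c : Fin n) (hc : c ∉ S) : (⊤ : SimpleGraph (Fin n)).Subgraph where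
  verts := ↑S ∪ {c}
  Adj a b := (a = c ∧ b ∈ S) ∨ (b = c ∧ a ∈ S)
  adj_sub := by
    rintro a b (⟨rfl, hb⟩ | ⟨rfl, hb⟩) <;> simp only [top_adj] <;> rintro rfl <;> exact hc hb
  edge_vert := by rintro a b (⟨rfl, hb⟩ | ⟨rfl, hb⟩) <;> simp [*]
  symm := ⟨by rintro a b h; tauto⟩

def dblSub (S : Finset (Fin n)) (hS : S.card = k) (j : ℕ) : (⊤ : SimpleGraph (Fin n)).Subgraph where
  verts := ↑S
  Adj a b := ∃ x y : Fin k,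
    a = S.orderEmbOfFin hS x ∧ b = S.orderEmbOfFin hS y ∧ Rnat j x.val y.val
  adj_sub := by
    rintro a b ⟨x, y, rfl, rfl, hR⟩
    simp only [top_adj]
    intro h
    exact Rnat_ne hR (congrArg Fin.val ((S.orderEmbOfFin hS).injective h))
  edge_vert := by
    rintro a b ⟨x, y, rfl, rfl, hR⟩
    exact S.orderEmbOfFin_mem hS x
  symm := ⟨by rintro a b ⟨x, y, h1, h2, hR⟩; exact ⟨y, x, h2, h1, Rnat_symm hR⟩⟩

lemma starSub_verts (S : Finset (Fin n)) (c : Fin n) (hc : c ∉ S) :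
    (starSub S c hc).verts = ↑S ∪ {c} := rfl

lemma dblSub_verts (S : Finset (Fin n)) (hS : S.card = k) (j : ℕ) :
    (dblSub S hS j).verts = ↑S := rfl

lemma starSub_isTree (S : Finset (Fin n)) (c : Fin n) (hc : c ∉ S) :
    (starSub S c hc).coe.IsTree := by
  have hcv : c ∈ (starSub S c hc).verts := Or.inr rfl
  have key : ∀ u : (starSub S c hc).verts, (starSub S c hc).coe.Reachable u ⟨c, hcv⟩ := by
    rintro ⟨u, hu⟩
    rcases hu with hu | hu
    · exact (Adj.reachable (by exact Or.inr ⟨rfl, hu⟩))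
    · have h2 : u = c := hu
      subst h2
      exact Reachable.refl _
  have hne : Nonempty (starSub S c hc).verts := ⟨⟨c, hcv⟩⟩
  constructor
  · exact Connected.mk fun u v => (key u).trans (key v).symm
  · apply acyclic_of_two_hubs (⟨c, hcv⟩ : (starSub S c hc).verts) ⟨c, hcv⟩
    rintro v hv _ a b ha hb
    rcases ha with ⟨hva, _⟩ | ⟨hac, _⟩
    · exact absurd (Subtype.ext hva) hv
    rcases hb with ⟨hvb, _⟩ | ⟨hbc, _⟩
    · exact absurd (Subtype.ext hvb) hv
    exact Subtype.ext (hac.trans hbc.symm)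

lemma dblSub_isTree (S : Finset (Fin n)) (hS : S.card = k) (j : ℕ) (hj : j < k / 2) :
    (dblSub S hS j).coe.IsTree := by
  set e := S.orderEmbOfFin hS with he
  have hk2 : 2 * j + 1 < k := by omega
  set x0 : Fin k := ⟨2 * j, by omega⟩ with hx0def
  set x1 : Fin k := ⟨2 * j + 1, hk2⟩ with hx1def
  have hmem : ∀ x : Fin k, (e x : Fin n) ∈ (dblSub S hS j).verts := fun x =>
    S.orderEmbOfFin_mem hS x
  have hsurj : ∀ u ∈ (dblSub S hS j).verts, ∃ x : Fin k, e x = u := by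
    intro u hu
    have : u ∈ Set.range e := by rw [he, Finset.range_orderEmbOfFin]; exact hu
    exact this
  have hadj01 : (dblSub S hS j).Adj (e x1) (e x0) := ⟨x1, x0, rfl, rfl, by
    show Rnat j (2 * j + 1) (2 * j); exact Rnat_symm Rnat_center⟩
  have key : ∀ u : (dblSub S hS j).verts,
      (dblSub S hS j).coe.Reachable u ⟨e x0, hmem x0⟩ := by
    rintro ⟨u, hu⟩
    obtain ⟨x, rfl⟩ := hsurj u hu
    by_cases h0 : x = x0
    · subst h0; exact Reachable.refl _
    by_cases h1 : x = x1
    · subst h1; exact Adj.reachable (by exact hadj01)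
    have hv0 : (x : ℕ) ≠ 2 * j := fun h => h0 (Fin.ext h)
    have hv1 : (x : ℕ) ≠ 2 * j + 1 := fun h => h1 (Fin.ext h)
    set y : Fin k := ⟨cfun j x, cfun_lt hj⟩ with hydef
    have hadj : (dblSub S hS j).coe.Adj ⟨e x, hmem x⟩ ⟨e y, hmem y⟩ :=
      ⟨x, y, rfl, rfl, Rnat_cfun hv0 hv1⟩
    refine hadj.reachable.trans ?_
    rcases cfun_cases j x with hc | hc
    · have : y = x0 := Fin.ext (by simp [hydef, hc, hx0def])
      rw [this]
    · have : y = x1 := Fin.ext (by simp [hydef, hc, hx1def])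
      rw [this]
      exact Adj.reachable (by exact hadj01)
  have hne : Nonempty (dblSub S hS j).verts := ⟨⟨e x0, hmem x0⟩⟩
  constructor
  · exact Connected.mk fun u v => (key u).trans (key v).symm
  · apply acyclic_of_two_hubs (⟨e x0, hmem x0⟩ : (dblSub S hS j).verts) ⟨e x1, hmem x1⟩
    rintro ⟨v, hv⟩ hvr hvs a b ha hb
    rw [Subgraph.coe_adj] at ha hb
    obtain ⟨x, y, hvx, hay, hR⟩ := ha
    obtain ⟨x', y', hvx', hby', hR'⟩ := hb
    have hxx : x' = x := e.injective (by rw [← hvx, ← hvx'])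
    rw [hxx] at hR'
    have hv0 : (x : ℕ) ≠ 2 * j := by
      intro h
      exact hvr (Subtype.ext (by rw [hvx]; congr 1; exact Fin.ext h))
    have hv1 : (x : ℕ) ≠ 2 * j + 1 := by
      intro h
      exact hvs (Subtype.ext (by rw [hvx]; congr 1; exact Fin.ext h))
    have : (y : ℕ) = cfun j x := Rnat_unique hv0 hv1 hR
    have h2 : (y' : ℕ) = cfun j x := Rnat_unique hv0 hv1 hR'
    have hyy : y' = y := Fin.ext (by omega)
    rw [hyy] at hby'
    exact Subtype.ext (by rw [hay, hby'])

lemma star_star_verts (S : Finset (Fin n)) {c c' : Fin n} (hc : c ∉ S) (hc' : c' ∉ S)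
    (hne : c ≠ c') : (starSub S c hc).verts ∩ (starSub S c' hc').verts = ↑S := by
  ext u
  simp only [starSub, Set.mem_inter_iff, Set.mem_union, Set.mem_singleton_iff, Finset.mem_coe]
  constructor
  · rintro ⟨h1 | rfl, h2 | h2⟩
    · exact h1
    · exact h1
    · exact h2
    · exact absurd h2 hne
  · intro h
    exact ⟨Or.inl h, Or.inl h⟩

lemma star_dbl_verts (S : Finset (Fin n)) (hS : S.card = k) {c : Fin n} (hc : c ∉ S) (j : ℕ) :
    (starSub S c hc).verts ∩ (dblSub S hS j).verts = ↑S := by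
  ext u
  simp only [starSub, dblSub, Set.mem_inter_iff, Set.mem_union, Set.mem_singleton_iff,
    Finset.mem_coe]
  constructor
  · rintro ⟨h1 | rfl, h2⟩ <;> exact h2
  · intro h
    exact ⟨Or.inl h, h⟩

lemma star_star_edges (S : Finset (Fin n)) {c c' : Fin n} (hc : c ∉ S) (hc' : c' ∉ S)
    (hne : c ≠ c') : (starSub S c hc).edgeSet ∩ (starSub S c' hc').edgeSet = ∅ := by
  ext e
  simp only [Set.mem_inter_iff, Set.mem_empty_iff_false, iff_false]
  refine Sym2.ind (fun a b => ?_) e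
  rintro ⟨h1, h2⟩
  rw [Subgraph.mem_edgeSet] at h1 h2
  rcases h1 with ⟨rfl, hb⟩ | ⟨rfl, ha⟩ <;> rcases h2 with ⟨h, h'⟩ | ⟨h, h'⟩
  · exact hne h
  · exact hc' (h ▸ hb)
  · exact hc' (h ▸ ha)
  · exact hne h

lemma star_dbl_edges (S : Finset (Fin n)) (hS : S.card = k) {c : Fin n} (hc : c ∉ S) (j : ℕ) :
    (starSub S c hc).edgeSet ∩ (dblSub S hS j).edgeSet = ∅ := by
  ext e
  simp only [Set.mem_inter_iff, Set.mem_empty_iff_false, iff_false]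
  refine Sym2.ind (fun a b => ?_) e
  rintro ⟨h1, h2⟩
  rw [Subgraph.mem_edgeSet] at h1 h2
  obtain ⟨x, y, rfl, rfl, hR⟩ := h2
  rcases h1 with ⟨h, h'⟩ | ⟨h, h'⟩
  · exact hc (h ▸ S.orderEmbOfFin_mem hS x)
  · exact hc (h ▸ S.orderEmbOfFin_mem hS y)

lemma dbl_dbl_edges (S : Finset (Fin n)) (hS : S.card = k) {j j' : ℕ} (hne : j ≠ j') :
    (dblSub S hS j).edgeSet ∩ (dblSub S hS j').edgeSet = ∅ := by
  ext e
  simp only [Set.mem_inter_iff, Set.mem_empty_iff_false, iff_false]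
  refine Sym2.ind (fun a b => ?_) e
  rintro ⟨h1, h2⟩
  rw [Subgraph.mem_edgeSet] at h1 h2
  obtain ⟨x, y, ha, hb, hR⟩ := h1
  obtain ⟨x', y', ha', hb', hR'⟩ := h2
  have hx : x' = x := (S.orderEmbOfFin hS).injective (by rw [← ha, ← ha'])
  have hy : y' = y := (S.orderEmbOfFin hS).injective (by rw [← hb, ← hb'])
  rw [hx, hy] at hR'
  exact hne (Rnat_disj hR hR')

lemma lower_mem (S : Finset (Fin n)) (hS : S.card = k) (hk : 2 ≤ k) (hkn : k ≤ n) :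
    ∃ T : Fin ((n - k) + k / 2) → (⊤ : SimpleGraph (Fin n)).Subgraph,
      (∀ i, IsSteinerTree ⊤ ↑S (T i)) ∧
      ∀ i j, i ≠ j → (T i).edgeSet ∩ (T j).edgeSet = ∅ ∧ (T i).verts ∩ (T j).verts = ↑S := by
  have hcc : Sᶜ.card = n - k := by rw [Finset.card_compl, hS, Fintype.card_fin]
  have hwS : ∀ i : Fin (n - k), Sᶜ.orderEmbOfFin hcc i ∉ S := fun i =>
    Finset.mem_compl.mp (Sᶜ.orderEmbOfFin_mem hcc i)
  refine ⟨fun i => if h : (i : ℕ) < n - k then starSub S (Sᶜ.orderEmbOfFin hcc ⟨i, h⟩) (hwS _)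
    else dblSub S hS ((i : ℕ) - (n - k)), fun i => ?_, fun i j hij => ?_⟩
  · dsimp only
    by_cases h : (i : ℕ) < n - k
    · rw [dif_pos h]
      exact ⟨Set.subset_union_left, starSub_isTree _ _ _⟩
    · rw [dif_neg h]
      refine ⟨subset_rfl, dblSub_isTree _ _ _ ?_⟩
      have := i.isLt
      omega
  · dsimp only
    by_cases hi : (i : ℕ) < n - k <;> by_cases hj : (j : ℕ) < n - k
    · rw [dif_pos hi, dif_pos hj]
      have hne : Sᶜ.orderEmbOfFin hcc ⟨i, hi⟩ ≠ Sᶜ.orderEmbOfFin hcc ⟨j, hj⟩ := by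
        intro h
        have h2 := congrArg Fin.val ((Sᶜ.orderEmbOfFin hcc).injective h)
        simp only at h2
        exact hij (Fin.ext h2)
      exact ⟨star_star_edges _ _ _ hne, star_star_verts _ _ _ hne⟩
    · rw [dif_pos hi, dif_neg hj]
      exact ⟨star_dbl_edges _ _ _ _, star_dbl_verts _ _ _ _⟩
    · rw [dif_neg hi, dif_pos hj]
      refine ⟨?_, ?_⟩
      · rw [Set.inter_comm]
        exact star_dbl_edges _ _ _ _
      · rw [Set.inter_comm]
        exact star_dbl_verts _ _ _ _
    · rw [dif_neg hi, dif_neg hj]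
      have hne : (i : ℕ) - (n - k) ≠ (j : ℕ) - (n - k) := by
        intro h
        apply hij
        refine Fin.ext ?_
        omega
      exact ⟨dbl_dbl_edges _ _ hne, Set.inter_self _⟩

lemma tree_edge_count {V : Type*} [Fintype V] {G : SimpleGraph V} (H : G.Subgraph)
    (h : H.coe.IsTree) : H.edgeSet.ncard + 1 = H.verts.ncard := by
  have h1 := h.card_edgeFinset
  have e1 : H.edgeSet.ncard = H.coe.edgeSet.ncard := by
    rw [← Subgraph.image_coe_edgeSet_coe,
      Set.ncard_image_of_injective _ (Sym2.map.injective Subtype.val_injective)]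
  have e2 : H.coe.edgeSet.ncard = H.coe.edgeFinset.card := by
    rw [← Nat.card_coe_set_eq, Nat.card_eq_fintype_card, edgeFinset_card]
  have e3 : H.verts.ncard = Fintype.card H.verts := by
    rw [← Nat.card_coe_set_eq, Nat.card_eq_fintype_card]
  omega

noncomputable def ES {n : ℕ} (S : Finset (Fin n)) : Finset (Sym2 (Fin n)) :=
  ((⊤ : SimpleGraph (Fin n)).edgeFinset).filter (fun e => ∀ v ∈ e, v ∈ S)

lemma ES_card {n k : ℕ} (S : Finset (Fin n)) (hS : S.card = k) : (ES S).card = k.choose 2 := by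
  have himg : ES S =
      ((⊤ : SimpleGraph {x // x ∈ S}).edgeFinset).image (Sym2.map (Subtype.val)) := by
    ext e
    refine Sym2.ind (fun a b => ?_) e
    simp only [ES, Finset.mem_filter, Finset.mem_image, mem_edgeFinset, edgeSet_top,
      Set.mem_setOf_eq]
    constructor
    · rintro ⟨hnd, hmem⟩
      have ha : a ∈ S := hmem a (Sym2.mem_mk_left a b)
      have hb : b ∈ S := hmem b (Sym2.mem_mk_right a b)
      refine ⟨s(⟨a, ha⟩, ⟨b, hb⟩), ?_, by simp⟩
      simp only [Set.mem_compl_iff, Sym2.mem_diagSet, Sym2.mk_isDiag_iff]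
      intro hcon
      exact hnd (by simp only [Set.mem_compl_iff, Sym2.mem_diagSet, Sym2.mk_isDiag_iff]; exact congrArg Subtype.val hcon)
    · rintro ⟨e', hnd, he'⟩
      revert hnd he'
      refine Sym2.ind (fun x y => ?_) e'
      intro hnd he'
      rw [Sym2.map_pair_eq] at he'
      rw [← he']
      constructor
      · simp only [Set.mem_compl_iff, Sym2.mem_diagSet, Sym2.mk_isDiag_iff] at *
        exact fun hcon => hnd (Subtype.ext hcon)
      · intro v hv
        rcases Sym2.mem_iff.mp hv with rfl | rfl
        · exact x.2
        · exact y.2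
  rw [himg, Finset.card_image_of_injective _ (Sym2.map.injective Subtype.val_injective),
    card_edgeFinset_top_eq_card_choose_two, Fintype.card_coe, hS]

lemma upper {n k m : ℕ} (S : Finset (Fin n)) (hS : S.card = k) (hk : 2 ≤ k) (hkn : k ≤ n)
    (T : Fin m → (⊤ : SimpleGraph (Fin n)).Subgraph)
    (hT : ∀ i, IsSteinerTree ⊤ ↑S (T i))
    (hd : ∀ i j, i ≠ j → (T i).edgeSet ∩ (T j).edgeSet = ∅ ∧ (T i).verts ∩ (T j).verts = ↑S) :
    m ≤ (n - k) + k / 2 := by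
  set A : Finset (Fin m) := Finset.univ.filter (fun i => (T i).verts = ↑S) with hA
  set B : Finset (Fin m) := Finset.univ.filter (fun i => ¬((T i).verts = ↑S)) with hB
  have hAB : A.card + B.card = m := by
    rw [hA, hB, Finset.card_filter_add_card_filter_not, Finset.card_univ, Fintype.card_fin]
  have hBcard : B.card ≤ n - k := by
    have hch : ∀ i : Fin m, ∃ v : Fin n, i ∈ B → v ∈ (T i).verts ∧ v ∉ S := by
      intro i
      by_cases hi : i ∈ B
      · have hne : (T i).verts ≠ ↑S := by
          rw [hB] at hi
          exact (Finset.mem_filter.mp hi).2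
        have hss : (↑S : Set (Fin n)) ⊂ (T i).verts := (hT i).1.ssubset_of_ne (Ne.symm hne)
        obtain ⟨v, hv1, hv2⟩ := Set.exists_of_ssubset hss
        exact ⟨v, fun _ => ⟨hv1, fun hc => hv2 hc⟩⟩
      · exact ⟨⟨0, by omega⟩, fun hc => absurd hc hi⟩
    choose f hf using hch
    have : B.card ≤ Sᶜ.card := by
      apply Finset.card_le_card_of_injOn f
      · intro i hi
        exact Finset.mem_compl.mpr (hf i hi).2
      · intro i hi j hj hfij
        by_contra hij
        have h2 := (hd i j hij).2
        have : f i ∈ (↑S : Set (Fin n)) := by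
          rw [← h2]
          exact ⟨(hf i hi).1, hfij ▸ (hf j hj).1⟩
        exact (hf i hi).2 this
    rwa [Finset.card_compl, hS, Fintype.card_fin] at this
  have hcardA : ∀ i ∈ A, ((T i).edgeSet.toFinset).card = k - 1 := by
    intro i hi
    have hverts : (T i).verts = ↑S := by
      rw [hA] at hi
      exact (Finset.mem_filter.mp hi).2
    have := tree_edge_count (T i) (hT i).2
    rw [hverts] at this
    have hSn : (↑S : Set (Fin n)).ncard = k := by
      rw [Set.ncard_coe_finset, hS]
    rw [hSn] at this
    rw [← Set.ncard_eq_toFinset_card']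
    omega
  have hsubES : ∀ i ∈ A, (T i).edgeSet.toFinset ⊆ ES S := by
    intro i hi e
    refine Sym2.ind (fun a b => ?_) e
    intro he
    rw [Set.mem_toFinset, Subgraph.mem_edgeSet] at he
    have hverts : (T i).verts = ↑S := (Finset.mem_filter.mp hi).2
    rw [ES, Finset.mem_filter, mem_edgeFinset]
    refine ⟨(T i).edgeSet_subset (by rwa [Subgraph.mem_edgeSet]), ?_⟩
    intro v hv
    rcases Sym2.mem_iff.mp hv with rfl | rfl
    · have := (T i).edge_vert he
      rwa [hverts] at this
    · have := (T i).edge_vert he.symm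
      rwa [hverts] at this
  have hdisj : ∀ i ∈ A, ∀ j ∈ A, i ≠ j →
      Disjoint ((T i).edgeSet.toFinset) ((T j).edgeSet.toFinset) := by
    intro i _ j _ hij
    rw [Set.disjoint_toFinset]
    rw [Set.disjoint_iff_inter_eq_empty]
    exact (hd i j hij).1
  have hsum : A.card * (k - 1) ≤ (ES S).card := by
    calc A.card * (k - 1) = ∑ i ∈ A, ((T i).edgeSet.toFinset).card := by
          rw [Finset.sum_congr rfl hcardA, Finset.sum_const, smul_eq_mul]
      _ = (A.biUnion (fun i => (T i).edgeSet.toFinset)).card := (Finset.card_biUnion hdisj).symm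
      _ ≤ (ES S).card := Finset.card_le_card (Finset.biUnion_subset.mpr hsubES)
  rw [ES_card S hS] at hsum
  have h2c : 2 * k.choose 2 = k * (k - 1) := by
    rw [Nat.choose_two_right]
    have hev : 2 ∣ k * (k - 1) := by
      rcases Nat.even_or_odd k with he | ho
      · exact Dvd.dvd.mul_right he.two_dvd _
      · have : Even (k - 1) := by
          rcases ho with ⟨r, hr⟩
          exact ⟨r, by omega⟩
        exact Dvd.dvd.mul_left this.two_dvd _
    omega
  have hAcard : A.card ≤ k / 2 := by
    have h1 : 2 * (A.card * (k - 1)) ≤ 2 * k.choose 2 := by omega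
    rw [h2c] at h1
    have h2 : (2 * A.card) * (k - 1) ≤ k * (k - 1) := by
      rw [mul_assoc]
      exact h1
    have h3 : 2 * A.card ≤ k := Nat.le_of_mul_le_mul_right h2 (by omega)
    omega
  omega

lemma steinerKappa_eq {n k : ℕ} (hk : 2 ≤ k) (hkn : k ≤ n) (S : Finset (Fin n))
    (hS : S.card = k) : steinerKappa (⊤ : SimpleGraph (Fin n)) ↑S = n - (k + 1) / 2 := by
  have hval : (n - k) + k / 2 = n - (k + 1) / 2 := by omega
  have hub : ∀ m ∈ {m | ∃ T : Fin m → (⊤ : SimpleGraph (Fin n)).Subgraph,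
      (∀ i, IsSteinerTree ⊤ ↑S (T i)) ∧
      ∀ i j, i ≠ j → (T i).edgeSet ∩ (T j).edgeSet = ∅ ∧ (T i).verts ∩ (T j).verts = ↑S},
      m ≤ (n - k) + k / 2 := by
    rintro m ⟨T, hT, hd⟩
    exact upper S hS hk hkn T hT hd
  have hmem : (n - k) + k / 2 ∈ {m | ∃ T : Fin m → (⊤ : SimpleGraph (Fin n)).Subgraph,
      (∀ i, IsSteinerTree ⊤ ↑S (T i)) ∧
      ∀ i j, i ≠ j → (T i).edgeSet ∩ (T j).edgeSet = ∅ ∧ (T i).verts ∩ (T j).verts = ↑S} :=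
    lower_mem S hS hk hkn
  have hbdd : BddAbove {m | ∃ T : Fin m → (⊤ : SimpleGraph (Fin n)).Subgraph,
      (∀ i, IsSteinerTree ⊤ ↑S (T i)) ∧
      ∀ i j, i ≠ j → (T i).edgeSet ∩ (T j).edgeSet = ∅ ∧ (T i).verts ∩ (T j).verts = ↑S} :=
    ⟨(n - k) + k / 2, fun m hm => hub m hm⟩
  rw [← hval]
  exact le_antisymm (csSup_le ⟨_, hmem⟩ hub) (le_csSup hbdd hmem)

theorem stmt0 (n k : ℕ) (hk : 2 ≤ k) (hkn : k ≤ n) :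
    genKappa (⊤ : SimpleGraph (Fin n)) k = n - (k + 1) / 2 := by
  have hn : 2 ≤ n := le_trans hk hkn
  haveI : Nonempty (Fin n) := ⟨⟨0, by omega⟩⟩
  unfold genKappa
  rw [if_pos connected_top]
  have hset : {m | ∃ S : Finset (Fin n), S.card = k ∧ steinerKappa (⊤ : SimpleGraph (Fin n)) ↑S = m}
      = {n - (k + 1) / 2} := by
    ext m
    simp only [Set.mem_setOf_eq, Set.mem_singleton_iff]
    constructor
    · rintro ⟨S, hS, rfl⟩
      exact steinerKappa_eq hk hkn S hS
    · rintro rfl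
      obtain ⟨S, _, hS⟩ := Finset.exists_subset_card_eq (s := (Finset.univ : Finset (Fin n))) (n := k)
        (by rw [Finset.card_univ, Fintype.card_fin]; exact hkn)
      exact ⟨S, hS, steinerKappa_eq hk hkn S hS⟩
  rw [hset, csInf_singleton]
end

section
/- If G is a connected graph of order n and 2 ≤ k ≤ n, then κ_k(G) ≤ λ_k(G) ≤ δ(G), where δ(G) is the minimum degree of G. -/
open SimpleGraph
open scoped Classical

lemma tree_adj {V : Type*} (G : SimpleGraph V) (S : Set V) (T : G.Subgraph)
    (h : IsSteinerTree G S T) {v u : V} (hv : v ∈ S) (hu : u ∈ S) (hvu : v ≠ u) :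
    ∃ w, T.Adj v w := by
  obtain ⟨hS, htree⟩ := h
  have hvT : v ∈ T.verts := hS hv
  have huT : u ∈ T.verts := hS hu
  obtain ⟨p⟩ := htree.isConnected.preconnected ⟨v, hvT⟩ ⟨u, huT⟩
  have hne : (⟨v, hvT⟩ : T.verts) ≠ ⟨u, huT⟩ := by
    simp [Subtype.ext_iff, hvu]
  have hnil : ¬ p.Nil := SimpleGraph.Walk.not_nil_of_ne hne
  have := p.adj_snd hnil
  exact ⟨(p.getVert 1 : T.verts), this⟩

lemma bound_lemma {V : Type*} [Fintype V] (G : SimpleGraph V) [DecidableRel G.Adj]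
    (S : Set V) {v u : V} (hv : v ∈ S) (hu : u ∈ S) (hvu : v ≠ u) {n : ℕ}
    (h : ∃ T : Fin n → G.Subgraph, (∀ i, IsSteinerTree G S (T i)) ∧
      ∀ i j, i ≠ j → (T i).edgeSet ∩ (T j).edgeSet = ∅) :
    n ≤ G.degree v := by
  obtain ⟨T, hT, hdisj⟩ := h
  choose w hw using fun i => tree_adj G S (T i) (hT i) hv hu hvu
  have hwG : ∀ i, w i ∈ G.neighborFinset v := fun i => by
    rw [SimpleGraph.mem_neighborFinset]
    exact (T i).adj_sub (hw i)
  have hinj : Function.Injective w := by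
    intro i j hij
    by_contra hne
    have h1 : s(v, w i) ∈ (T i).edgeSet := (hw i)
    have h2 : s(v, w i) ∈ (T j).edgeSet := by
      rw [SimpleGraph.Subgraph.mem_edgeSet, hij]; exact hw j
    have := hdisj i j hne
    exact absurd (Set.mem_inter h1 h2) (by simp [this])
  calc n = (Finset.univ : Finset (Fin n)).card := by simp
    _ ≤ (G.neighborFinset v).card :=
        Finset.card_le_card_of_injOn w (fun i _ => hwG i) (Function.Injective.injOn hinj)
    _ = G.degree v := rfl

theorem stmt2 {V : Type*} [Fintype V] (G : SimpleGraph V) [DecidableRel G.Adj]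
    (hG : G.Connected) (k : ℕ) (hk : 2 ≤ k) (hkn : k ≤ Fintype.card V) :
    genKappa G k ≤ genLambda G k ∧ genLambda G k ≤ G.minDegree := by
  have hVpos : 0 < Fintype.card V := lt_of_lt_of_le (by omega) hkn
  have : Nonempty V := Fintype.card_pos_iff.mp hVpos
  have hzero : ∀ (S : Set V),
      (0 : ℕ) ∈ {n | ∃ T : Fin n → G.Subgraph, (∀ i, IsSteinerTree G S (T i)) ∧
        ∀ i j, i ≠ j → (T i).edgeSet ∩ (T j).edgeSet = ∅} :=
    fun S => ⟨Fin.elim0, fun i => i.elim0, fun i => i.elim0⟩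
  -- for any S with two distinct elements v u, steinerLambda G S ≤ G.degree v
  have hlam_le : ∀ (S : Set V) (v u : V), v ∈ S → u ∈ S → v ≠ u →
      steinerLambda G S ≤ G.degree v := by
    intro S v u hv hu hvu
    exact csSup_le ⟨0, hzero S⟩ (fun n hn => bound_lemma G S hv hu hvu hn)
  have hkap_le_lam : ∀ (S : Finset V), S.card = k → steinerKappa G ↑S ≤ steinerLambda G ↑S := by
    intro S hScard
    obtain ⟨v, hv⟩ := Finset.card_pos.mp (by omega : 0 < S.card)
    obtain ⟨u, hu, huv⟩ := Finset.exists_mem_ne (by omega : 1 < S.card) v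
    apply csSup_le_csSup
    · exact ⟨G.degree v, fun n hn => bound_lemma G ↑S (by simpa using hv) (by simpa using hu)
        (Ne.symm huv) hn⟩
    · exact ⟨0, Fin.elim0, fun i => i.elim0, fun i => i.elim0⟩
    · rintro n ⟨T, hT, hd⟩
      exact ⟨T, hT, fun i j hij => (hd i j hij).1⟩
  constructor
  · rw [genKappa, genLambda, if_pos hG, if_pos hG]
    have hne : {m | ∃ S : Finset V, S.card = k ∧ steinerLambda G ↑S = m}.Nonempty := by
      obtain ⟨S, _, hScard⟩ := Finset.exists_subset_card_eq (s := Finset.univ) (by simpa using hkn)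
      exact ⟨_, S, hScard, rfl⟩
    obtain ⟨S, hScard, hSeq⟩ := Nat.sInf_mem hne
    calc sInf {m | ∃ S : Finset V, S.card = k ∧ steinerKappa G ↑S = m}
        ≤ steinerKappa G ↑S := Nat.sInf_le ⟨S, hScard, rfl⟩
      _ ≤ steinerLambda G ↑S := hkap_le_lam S hScard
      _ = _ := hSeq
  · rw [genLambda, if_pos hG]
    obtain ⟨v, hvdeg⟩ := G.exists_minimal_degree_vertex
    obtain ⟨S, hvS, hScard⟩ := Finset.exists_superset_card_eq
      (s := {v}) (by simpa using hk.trans' (by omega) : ({v} : Finset V).card ≤ k) hkn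
    have hvS' : v ∈ S := hvS (Finset.mem_singleton_self v)
    obtain ⟨u, hu, huv⟩ := Finset.exists_mem_ne (by omega : 1 < S.card) v
    calc sInf {m | ∃ S : Finset V, S.card = k ∧ steinerLambda G ↑S = m}
        ≤ steinerLambda G ↑S := Nat.sInf_le ⟨S, hScard, rfl⟩
      _ ≤ G.degree v := hlam_le ↑S v u (by simpa using hvS') (by simpa using hu) (Ne.symm huv)
      _ = G.minDegree := hvdeg.symm
end

section
/- For a connected graph G of order n and an integer k with 3 ≤ k ≤ n, λ_k(G) ≥ ⌊λ(G)/2⌋, where λ(G) is the edge-connectivity of G. -/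
open SimpleGraph
open scoped Classical

section NWAux

variable {V : Type*}


/-- Walk replacement: if every edge of a walk in `A` can be replaced by a `B`-walk whose
edges lie in `S`, then the endpoints are joined in `B` by a walk with edges in `S`. -/
lemma walk_replace {A B : SimpleGraph V} (S : Set (Sym2 V)) {x y : V} (w : A.Walk x y)
    (hrep : ∀ a b : V, A.Adj a b → s(a, b) ∈ w.edges →
      ∃ q : B.Walk a b, ∀ e ∈ q.edges, e ∈ S) :
    ∃ q : B.Walk x y, ∀ e ∈ q.edges, e ∈ S := by
  induction w with
  | nil => exact ⟨Walk.nil, by simp⟩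
  | @cons u m v h w ih =>
    obtain ⟨q₁, hq₁⟩ := hrep u m h (by simp)
    obtain ⟨q₂, hq₂⟩ := ih (fun a b hab hmem => hrep a b hab (by simp [hmem]))
    exact ⟨q₁.append q₂, by
      intro e he
      rw [Walk.edges_append, List.mem_append] at he
      exact he.elim (hq₁ e) (hq₂ e)⟩

/-- A walk whose support lies in `s` gives a walk in the induced graph. -/
lemma walk_induce {B : SimpleGraph V} {s : Set V} :
    ∀ {x y : V} (q : B.Walk x y) (hs : ∀ z ∈ q.support, z ∈ s),
    Nonempty ((B.induce s).Walk ⟨x, hs x q.start_mem_support⟩ ⟨y, hs y q.end_mem_support⟩)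
  | x, _, Walk.nil, hs => ⟨Walk.nil⟩
  | x, y, Walk.cons (v := m) h q, hs => by
    have hm : ∀ z ∈ q.support, z ∈ s := fun z hz => hs z (by simp [hz])
    obtain ⟨q'⟩ := walk_induce q hm
    exact ⟨Walk.cons (by exact h : (B.induce s).Adj ⟨x, _⟩ ⟨m, _⟩) q'⟩

/-- Every vertex on a walk whose edges lie in `S` is reachable from the start
in `fromEdgeSet S`. -/
lemma walk_support_reachable {B : SimpleGraph V} {S : Set (Sym2 V)} :
    ∀ {x y : V} (q : B.Walk x y) (hq : ∀ e ∈ q.edges, e ∈ S),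
      ∀ z ∈ q.support, (fromEdgeSet S).Reachable x z
  | x, _, Walk.nil, hq => by
    intro z hz; simp at hz; subst hz; rfl
  | x, y, Walk.cons (v := m) h q, hq => by
    intro z hz
    have hadj : (fromEdgeSet S).Adj x m :=
      ⟨hq _ (by simp), h.ne⟩
    rcases List.mem_cons.mp (by simpa using hz) with rfl | hz'
    · rfl
    · exact hadj.reachable.trans
        (walk_support_reachable q (fun e he => hq e (by simp [he])) z hz')


/-- A connected graph on a finite vertex type has at least `card V - 1` edges. -/
lemma card_le_ncard_edgeSet_of_connected [Fintype V] {H : SimpleGraph V} (hH : H.Connected) :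
    Fintype.card V ≤ H.edgeSet.ncard + 1 := by
  have hne : Nonempty V := hH.nonempty
  obtain ⟨r⟩ := hne
  have key : ∀ v : V, v ≠ r → ∃ w : V, H.Adj v w ∧ H.dist w r < H.dist v r := by
    intro v hv
    have hreach : H.Reachable v r := hH v r
    have hd : H.dist v r ≠ 0 := by
      rw [SimpleGraph.dist_ne_zero_iff_ne_and_reachable]
      exact ⟨hv, hreach⟩
    obtain ⟨p, hp⟩ := hreach.exists_walk_length_eq_dist
    cases p with
    | nil => exact absurd rfl hv
    | cons h q =>
      refine ⟨_, h, ?_⟩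
      have := SimpleGraph.dist_le q
      rw [Walk.length_cons] at hp
      omega
  choose! w hw1 hw2 using key
  have hinj : Set.InjOn (fun v => s(v, w v)) {v : V | v ≠ r} := by
    intro a ha b hb hab
    simp only [Sym2.eq_iff] at hab
    rcases hab with ⟨rfl, -⟩ | ⟨h1, h2⟩
    · rfl
    · exfalso
      have h3 := hw2 a ha
      have h4 := hw2 b hb
      rw [h2] at h3
      rw [← h1] at h4
      omega
  have hsub : ∀ a ∈ {v : V | v ≠ r}, s(a, w a) ∈ H.edgeSet := by
    intro a ha
    exact (hw1 a ha)
  have h1 : ({v : V | v ≠ r}).ncard ≤ H.edgeSet.ncard :=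
    Set.ncard_le_ncard_of_injOn _ hsub hinj (Set.toFinite _)
  have h2 : ({v : V | v ≠ r}).ncard + 1 = Fintype.card V := by
    have : {v : V | v ≠ r} = Set.univ \ {r} := by ext; simp
    rw [this, Set.ncard_diff_singleton_add_one (Set.mem_univ r), Set.ncard_univ,
      Nat.card_eq_fintype_card]
  omega

/-- On a path, there is at most one edge through the first vertex. -/
lemma path_start_edge_unique {H : SimpleGraph V} :
    ∀ {v u : V} (p : H.Walk v u) (_ : p.IsPath) (e₁ e₂ : Sym2 V),
      e₁ ∈ p.edges → e₂ ∈ p.edges → v ∈ e₁ → v ∈ e₂ → e₁ = e₂ := by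
  intro v u p hp
  have key : ∀ e ∈ p.edges, v ∈ e → ∀ e' ∈ p.edges, v ∈ e' → e = e' := by
    cases p with
    | nil => intro e he; simp at he
    | @cons _ m _ h q =>
      have hq := (Walk.cons_isPath_iff _ _).mp hp
      have main : ∀ e ∈ (Walk.cons h q).edges, v ∈ e → e = s(v, m) := by
        intro e he hv
        rw [Walk.edges_cons, List.mem_cons] at he
        rcases he with rfl | he
        · rfl
        · exfalso
          induction e using Sym2.ind with
          | _ a b =>
            rcases Sym2.mem_iff.mp hv with rfl | rfl
            · exact hq.2 (Walk.fst_mem_support_of_mem_edges q he)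
            · exact hq.2 (Walk.snd_mem_support_of_mem_edges q he)
      intro e he hv e' he' hv'
      rw [main e he hv, main e' he' hv']
  intro e₁ e₂ h1 h2 h3 h4
  exact key e₁ h1 h3 e₂ h2 h4


/-- An acyclic graph on a finite nonempty vertex type has at most `card V - 1` edges. -/
lemma ncard_edgeSet_le_of_acyclic [Fintype V] [Nonempty V] {H : SimpleGraph V}
    (hH : H.IsAcyclic) : H.edgeSet.ncard + 1 ≤ Fintype.card V := by
  -- root of each component
  set r : V → V := fun v => (H.connectedComponentMk v).out with hr
  have hr1 : ∀ v, H.Reachable v (r v) := by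
    intro v
    have h : H.connectedComponentMk (r v) = H.connectedComponentMk v := Quot.out_eq _
    exact (ConnectedComponent.exact h).symm
  have hr2 : ∀ u v, H.Reachable u v → r u = r v := by
    intro u v huv
    simp only [hr]
    rw [ConnectedComponent.sound huv]
  -- chosen paths to the root
  have hPex : ∀ v, ∃ p : H.Walk v (r v), p.IsPath := fun v =>
    ⟨(hr1 v).some.toPath, Walk.toPath _ |>.2⟩
  choose P hP using hPex
  -- each edge lies on the chosen path of one of its endpoints
  have claim : ∀ a b : V, H.Adj a b → s(a, b) ∈ (P a).edges ∨ s(a, b) ∈ (P b).edges := by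
    intro a b hab
    by_cases hb : s(a, b) ∈ (P b).edges
    · exact Or.inr hb
    by_cases hsup : a ∈ (P b).support
    · exfalso
      have hq : ((P b).takeUntil a hsup).IsPath := (hP b).takeUntil hsup
      have huniq := hH.path_unique ⟨(P b).takeUntil a hsup, hq⟩ (Path.singleton hab.symm)
      apply hb
      have : s(b, a) ∈ ((P b).takeUntil a hsup).edges := by
        rw [Subtype.mk.injEq] at huniq
        rw [huniq]
        simp [Path.singleton]
      rw [Sym2.eq_swap] at this
      exact Walk.edges_takeUntil_subset _ _ this
    · left
      have hrab : r b = r a := hr2 b a hab.symm.reachable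
      have hw : ((Walk.cons hab (P b)).copy rfl hrab).IsPath := by
        rw [Walk.isPath_copy]
        exact (Walk.cons_isPath_iff _ _).mpr ⟨hP b, hsup⟩
      have huniq := hH.path_unique ⟨(Walk.cons hab (P b)).copy rfl hrab, hw⟩ ⟨P a, hP a⟩
      rw [Subtype.mk.injEq] at huniq
      rw [← huniq]
      simp
  -- the selection function
  set g : Sym2 V → V := fun e =>
    if h : ∃ v, v ∈ e ∧ e ∈ (P v).edges then h.choose else (Classical.arbitrary V) with hg
  have hgspec : ∀ e ∈ H.edgeSet, g e ∈ e ∧ e ∈ (P (g e)).edges := by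
    intro e he
    induction e using Sym2.ind with
    | _ a b =>
      have hab : H.Adj a b := he
      have hex : ∃ v, v ∈ s(a, b) ∧ s(a, b) ∈ (P v).edges := by
        rcases claim a b hab with h | h
        · exact ⟨a, by simp, h⟩
        · exact ⟨b, by simp, h⟩
      have : g s(a, b) = hex.choose := by simp only [hg, dif_pos hex]
      rw [this]
      exact hex.choose_spec
  have hinj : Set.InjOn g H.edgeSet := by
    intro e₁ h₁ e₂ h₂ heq
    obtain ⟨hm₁, he₁⟩ := hgspec e₁ h₁
    obtain ⟨hm₂, he₂⟩ := hgspec e₂ h₂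
    rw [heq] at hm₁ he₁
    exact path_start_edge_unique (P (g e₂)) (hP _) e₁ e₂ he₁ he₂ hm₁ hm₂
  -- the image avoids all roots
  have havoid : ∀ e ∈ H.edgeSet, g e ≠ r (g e) := by
    intro e he hfix
    obtain ⟨-, hmem⟩ := hgspec e he
    have : ((P (g e)).copy rfl hfix.symm).IsPath := by rw [Walk.isPath_copy]; exact hP _
    have hnil := Walk.isPath_iff_eq_nil.mp this
    have : ((P (g e)).copy rfl hfix.symm).edges = [] := by rw [hnil]; rfl
    rw [Walk.edges_copy] at this
    rw [this] at hmem
    simp at hmem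
  -- conclude by counting
  set r₀ : V := r (Classical.arbitrary V) with hr₀
  have hr₀fix : r r₀ = r₀ := by
    simp only [hr₀]
    exact (hr2 _ _ (hr1 (Classical.arbitrary V))).symm
  have hsub : ∀ e ∈ H.edgeSet, g e ∈ {v : V | v ≠ r₀} := by
    intro e he
    simp only [Set.mem_setOf_eq]
    intro hmem
    apply havoid e he
    rw [hmem, hr₀fix]
  have h1 : H.edgeSet.ncard ≤ ({v : V | v ≠ r₀}).ncard :=
    Set.ncard_le_ncard_of_injOn _ hsub hinj (Set.toFinite _)
  have h2 : ({v : V | v ≠ r₀}).ncard + 1 = Fintype.card V := by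
    have : {v : V | v ≠ r₀} = Set.univ \ {r₀} := by ext; simp
    rw [this, Set.ncard_diff_singleton_add_one (Set.mem_univ r₀), Set.ncard_univ,
      Nat.card_eq_fintype_card]
  omega


lemma acyclic_mono {H K : SimpleGraph V} (h : H ≤ K) (hK : K.IsAcyclic) : H.IsAcyclic := by
  intro v c hc
  exact hK (c.transfer K (fun e he => edgeSet_mono h (c.edges_subset_edgeSet he)))
    (hc.transfer _)

lemma edge_le_of_adj {G : SimpleGraph V} {x y : V} (h : G.Adj x y) : edge x y ≤ G := by
  intro a b hab
  rw [edge_adj] at hab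
  rcases hab.1 with ⟨rfl, rfl⟩ | ⟨rfl, rfl⟩
  · exact h
  · exact h.symm

lemma sup_edge_sdiff_le {H : SimpleGraph V} {x y : V} :
    (H ⊔ edge x y) \ fromEdgeSet {s(x, y)} ≤ H := by
  intro a b hab
  obtain ⟨h1, h2⟩ := hab
  rcases h1 with h | h
  · exact h
  · exfalso
    rw [edge_adj] at h
    apply h2
    rw [fromEdgeSet_adj]
    refine ⟨?_, h.2⟩
    rcases h.1 with ⟨rfl, rfl⟩ | ⟨rfl, rfl⟩
    · rfl
    · exact Sym2.eq_swap

/-- Adding an edge between two different components of an acyclic graph keeps it acyclic. -/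
lemma isAcyclic_sup_edge {H : SimpleGraph V} (hH : H.IsAcyclic) {x y : V} (hxy : x ≠ y)
    (hreach : ¬ H.Reachable x y) : (H ⊔ edge x y).IsAcyclic := by
  intro v c hc
  by_cases he : s(x, y) ∈ c.edges
  · have : (H ⊔ edge x y).Adj x y ∧
        ((H ⊔ edge x y) \ fromEdgeSet {s(x, y)}).Reachable x y :=
      (adj_and_reachable_delete_edges_iff_exists_cycle).mpr ⟨v, c, hc, he⟩
    exact hreach (this.2.mono sup_edge_sdiff_le)
  · apply hH (c.transfer H ?_) (hc.transfer _)
    intro e hec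
    have := c.edges_subset_edgeSet hec
    rw [edgeSet_sup] at this
    rcases this with h | h
    · exact h
    · exfalso
      rw [edge_edgeSet_of_ne hxy] at h
      exact he (h ▸ hec)

/-- The exchange step keeps a forest acyclic: add `s(x,y)` and remove an edge `f` of
the path between `x` and `y`. -/
lemma isAcyclic_exchange {H : SimpleGraph V} (hH : H.IsAcyclic) {x y : V} (hxy : x ≠ y)
    (hnadj : ¬ H.Adj x y) {p : H.Walk x y} (hp : p.IsPath) {f : Sym2 V} (hf : f ∈ p.edges) :
    ((H ⊔ edge x y).deleteEdges {f}).IsAcyclic := by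
  intro v c hc
  by_cases he : s(x, y) ∈ c.edges
  · -- then x, y are joined in (H - f), giving a second x-y path in H
    have hne : f ≠ s(x, y) := by
      rintro rfl
      exact hnadj (p.adj_of_mem_edges hf)
    have key : ((H ⊔ edge x y).deleteEdges {f} \ fromEdgeSet {s(x, y)}).Reachable x y :=
      ((adj_and_reachable_delete_edges_iff_exists_cycle).mpr ⟨v, c, hc, he⟩).2
    have hle : (H ⊔ edge x y).deleteEdges {f} \ fromEdgeSet {s(x, y)} ≤ H.deleteEdges {f} := by
      intro a b hab
      obtain ⟨h1, h2⟩ := hab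
      rw [deleteEdges_adj] at h1 ⊢
      refine ⟨?_, h1.2⟩
      rcases h1.1 with h | h
      · exact h
      · exfalso
        rw [edge_adj] at h
        apply h2
        rw [fromEdgeSet_adj]
        refine ⟨?_, h.2⟩
        rcases h.1 with ⟨rfl, rfl⟩ | ⟨rfl, rfl⟩
        · rfl
        · exact Sym2.eq_swap
    obtain ⟨w⟩ := key.mono hle
    -- transfer the walk to H
    have hwe : ∀ e ∈ w.edges, e ∈ H.edgeSet := by
      intro e hew
      have := w.edges_subset_edgeSet hew
      rw [edgeSet_deleteEdges] at this
      exact this.1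
    have hwf : f ∉ w.edges := by
      intro hmem
      have := w.edges_subset_edgeSet hmem
      rw [edgeSet_deleteEdges] at this
      exact this.2 rfl
    set q := (w.transfer H hwe).toPath with hq
    have hqp : (q : H.Walk x y).IsPath := q.2
    have := hH.path_unique ⟨p, hp⟩ q
    rw [Subtype.mk.injEq] at this
    -- f ∈ p.edges = q.edges ⊆ w.edges, contradiction
    have hfq : f ∈ (q : H.Walk x y).edges := this ▸ hf
    have : f ∈ (w.transfer H hwe).edges := Walk.edges_toPath_subset _ hfq
    rw [Walk.edges_transfer] at this
    exact hwf this
  · -- the cycle avoids s(x,y), so it lives in H, contradiction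
    apply hH (c.transfer H ?_) (hc.transfer _)
    intro e hec
    have := c.edges_subset_edgeSet hec
    rw [edgeSet_deleteEdges, edgeSet_sup] at this
    rcases this.1 with h | h
    · exact h
    · exfalso
      rw [edge_edgeSet_of_ne hxy] at h
      exact he (h ▸ hec)


def NWValid (G : SimpleGraph V) {ℓ : ℕ} (F : Fin ℓ → SimpleGraph V) : Prop :=
  (∀ i, F i ≤ G) ∧ (∀ i, (F i).IsAcyclic) ∧
    (∀ i j, i ≠ j → Disjoint (F i).edgeSet ((F j).edgeSet))

noncomputable def NWwt {ℓ : ℕ} (F : Fin ℓ → SimpleGraph V) : ℕ :=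
  ∑ i, (F i).edgeSet.ncard

def NWStep (G : SimpleGraph V) {ℓ : ℕ} (F F' : Fin ℓ → SimpleGraph V) : Prop :=
  ∃ (i : Fin ℓ) (x y : V) (p : (F i).Walk x y) (f : Sym2 V),
    G.Adj x y ∧ (∀ j, ¬ (F j).Adj x y) ∧ p.IsPath ∧ f ∈ p.edges ∧
    F' = Function.update F i (((F i) ⊔ edge x y).deleteEdges {f})

def NWReach (G : SimpleGraph V) {ℓ : ℕ} (F₀ : Fin ℓ → SimpleGraph V) :
    ℕ → (Fin ℓ → SimpleGraph V) → Prop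
  | 0 => fun F => F = F₀
  | n+1 => fun F' => ∃ F, NWReach G F₀ n F ∧ NWStep G F F'

lemma unused_iff {ℓ : ℕ} {F : Fin ℓ → SimpleGraph V} {x y : V} :
    (∀ j, ¬ (F j).Adj x y) ↔ ∀ j, s(x, y) ∉ (F j).edgeSet := by
  simp [mem_edgeSet]

lemma exchange_edgeSet {H : SimpleGraph V} {x y : V} (hxy : x ≠ y) (f : Sym2 V) :
    ((H ⊔ edge x y).deleteEdges {f}).edgeSet = (H.edgeSet ∪ {s(x, y)}) \ {f} := by
  rw [edgeSet_deleteEdges, edgeSet_sup, edge_edgeSet_of_ne hxy]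

lemma NWStep.valid {G : SimpleGraph V} {ℓ : ℕ} {F F' : Fin ℓ → SimpleGraph V}
    (hF : NWValid G F) (h : NWStep G F F') : NWValid G F' := by
  obtain ⟨i, x, y, p, f, hG, hunused, hp, hf, rfl⟩ := h
  have hxy : x ≠ y := hG.ne
  have hfE : f ∈ (F i).edgeSet := p.edges_subset_edgeSet hf
  have hxyE : ∀ j, s(x, y) ∉ (F j).edgeSet := unused_iff.mp hunused
  refine ⟨?_, ?_, ?_⟩
  · intro j
    by_cases hj : j = i
    · subst hj
      rw [Function.update_self]
      exact le_trans (deleteEdges_le _) (sup_le (hF.1 j) (edge_le_of_adj hG))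
    · rw [Function.update_of_ne hj]; exact hF.1 j
  · intro j
    by_cases hj : j = i
    · subst hj
      rw [Function.update_self]
      exact isAcyclic_exchange (hF.2.1 j) hxy (hunused j) hp hf
    · rw [Function.update_of_ne hj]; exact hF.2.1 j
  · intro j j' hjj'
    have base := hF.2.2
    by_cases hj : j = i <;> by_cases hj' : j' = i
    · exact absurd (hj.trans hj'.symm) hjj'
    · subst hj
      rw [Function.update_self, Function.update_of_ne hj', exchange_edgeSet hxy]
      refine Set.disjoint_of_subset_left Set.diff_subset ?_
      rw [Set.disjoint_union_left]
      exact ⟨base j j' hjj', Set.disjoint_singleton_left.mpr (hxyE j')⟩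
    · subst hj'
      rw [Function.update_self, Function.update_of_ne hj, exchange_edgeSet hxy]
      refine Set.disjoint_of_subset_right Set.diff_subset ?_
      rw [Set.disjoint_union_right]
      exact ⟨base j j' hjj', Set.disjoint_singleton_right.mpr (hxyE j)⟩
    · rw [Function.update_of_ne hj, Function.update_of_ne hj']
      exact base j j' hjj'

lemma NWStep.wt_eq {G : SimpleGraph V} {ℓ : ℕ} {F F' : Fin ℓ → SimpleGraph V}
    (hF : NWValid G F) (h : NWStep G F F') : NWwt F' = NWwt F := by
  obtain ⟨i, x, y, p, f, hG, hunused, hp, hf, rfl⟩ := h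
  have hxy : x ≠ y := hG.ne
  have hfE : f ∈ (F i).edgeSet := p.edges_subset_edgeSet hf
  have hxyE : s(x, y) ∉ (F i).edgeSet := unused_iff.mp hunused i
  have hcard : (((F i) ⊔ edge x y).deleteEdges {f}).edgeSet.ncard = (F i).edgeSet.ncard := by
    rw [exchange_edgeSet hxy]
    have : (F i).edgeSet ∪ {s(x, y)} = insert s(x, y) (F i).edgeSet := by
      rw [Set.union_singleton]
    rw [this, ← Set.insert_diff_singleton_comm (by rintro rfl; exact hxyE hfE)]
    exact Set.ncard_exchange hxyE hfE
  unfold NWwt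
  have hrw : ∀ j, (Function.update F i (((F i) ⊔ edge x y).deleteEdges {f}) j).edgeSet.ncard
      = Function.update (fun j => (F j).edgeSet.ncard) i
          ((((F i) ⊔ edge x y).deleteEdges {f}).edgeSet.ncard) j := by
    intro j
    by_cases hj : j = i
    · subst hj; rw [Function.update_self, Function.update_self]
    · rw [Function.update_of_ne hj, Function.update_of_ne hj]
  rw [Finset.sum_congr rfl (fun j _ => hrw j), Finset.sum_update_of_mem (Finset.mem_univ i),
    hcard, Finset.sdiff_singleton_eq_erase]
  exact Finset.add_sum_erase _ (fun j => (F j).edgeSet.ncard) (Finset.mem_univ i)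

lemma NWReach.valid_wt {G : SimpleGraph V} {ℓ : ℕ} {F₀ : Fin ℓ → SimpleGraph V}
    (hF₀ : NWValid G F₀) :
    ∀ n F, NWReach G F₀ n F → NWValid G F ∧ NWwt F = NWwt F₀
  | 0, F, h => by subst h; exact ⟨hF₀, rfl⟩
  | (n+1), F', h => by
    obtain ⟨F, hn, hstep⟩ := h
    obtain ⟨hv, hw⟩ := NWReach.valid_wt hF₀ n F hn
    exact ⟨hstep.valid hv, (hstep.wt_eq hv).trans hw⟩

lemma exists_max_valid [Fintype V] (G : SimpleGraph V) (ℓ : ℕ) :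
    ∃ F₀ : Fin ℓ → SimpleGraph V, NWValid G F₀ ∧
      ∀ F : Fin ℓ → SimpleGraph V, NWValid G F → NWwt F ≤ NWwt F₀ := by
  set S : Set ℕ := {n | ∃ F : Fin ℓ → SimpleGraph V, NWValid G F ∧ NWwt F = n} with hS
  have hne : S.Nonempty := by
    refine ⟨NWwt (fun _ => (⊥ : SimpleGraph V)), fun _ => ⊥, ⟨?_, ?_, ?_⟩, rfl⟩
    · intro i; exact bot_le
    · intro i; exact isAcyclic_bot
    · intro i j _; simp
  have hbdd : BddAbove S := by
    refine ⟨ℓ * G.edgeSet.ncard, ?_⟩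
    rintro n ⟨F, hF, rfl⟩
    calc NWwt F ≤ ∑ _i : Fin ℓ, G.edgeSet.ncard := by
          apply Finset.sum_le_sum
          intro i _
          exact Set.ncard_le_ncard (edgeSet_mono (hF.1 i)) (Set.toFinite _)
      _ = ℓ * G.edgeSet.ncard := by simp [Finset.sum_const, mul_comm]
  obtain ⟨F₀, hF₀, hwt⟩ := Nat.sSup_mem hne hbdd
  exact ⟨F₀, hF₀, fun F hF => hwt ▸ le_csSup hbdd ⟨F, hF, rfl⟩⟩

lemma NWwt_update {ℓ : ℕ} (F : Fin ℓ → SimpleGraph V) (i : Fin ℓ) (H : SimpleGraph V) :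
    NWwt (Function.update F i H) + (F i).edgeSet.ncard = NWwt F + H.edgeSet.ncard := by
  unfold NWwt
  have hrw : ∀ j, (Function.update F i H j).edgeSet.ncard
      = Function.update (fun j => (F j).edgeSet.ncard) i (H.edgeSet.ncard) j := by
    intro j
    by_cases hj : j = i
    · subst hj; rw [Function.update_self, Function.update_self]
    · rw [Function.update_of_ne hj, Function.update_of_ne hj]
  rw [Finset.sum_congr rfl (fun j _ => hrw j), Finset.sum_update_of_mem (Finset.mem_univ i),
    Finset.sdiff_singleton_eq_erase,
    ← Finset.add_sum_erase _ (fun j => (F j).edgeSet.ncard) (Finset.mem_univ i)]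
  omega

/-- In a maximal tuple (or anything reachable from one), the two ends of an unused edge of `G`
are connected in every forest of the tuple. -/
lemma reach_forest_reachable [Fintype V] {G : SimpleGraph V} {ℓ : ℕ} {F₀ : Fin ℓ → SimpleGraph V}
    (hv : NWValid G F₀) (hmax : ∀ F : Fin ℓ → SimpleGraph V, NWValid G F → NWwt F ≤ NWwt F₀)
    {n : ℕ} {F : Fin ℓ → SimpleGraph V} (hn : NWReach G F₀ n F)
    {x y : V} (hadj : G.Adj x y) (hun : ∀ j, ¬ (F j).Adj x y) (i : Fin ℓ) :
    (F i).Reachable x y := by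
  obtain ⟨hFv, hFw⟩ := NWReach.valid_wt hv n F hn
  by_contra hreach
  set F' := Function.update F i ((F i) ⊔ edge x y) with hF'
  have hxyE : ∀ j, s(x, y) ∉ (F j).edgeSet := unused_iff.mp hun
  have hv' : NWValid G F' := by
    refine ⟨?_, ?_, ?_⟩
    · intro j
      by_cases hj : j = i
      · subst hj; rw [hF', Function.update_self]
        exact sup_le (hFv.1 j) (edge_le_of_adj hadj)
      · rw [hF', Function.update_of_ne hj]; exact hFv.1 j
    · intro j
      by_cases hj : j = i
      · subst hj; rw [hF', Function.update_self]
        exact isAcyclic_sup_edge (hFv.2.1 j) hadj.ne hreach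
      · rw [hF', Function.update_of_ne hj]; exact hFv.2.1 j
    · intro j j' hjj'
      have hsupE : ((F i) ⊔ edge x y).edgeSet = (F i).edgeSet ∪ {s(x, y)} := by
        rw [edgeSet_sup, edge_edgeSet_of_ne hadj.ne]
      by_cases hj : j = i <;> by_cases hj' : j' = i
      · exact absurd (hj.trans hj'.symm) hjj'
      · subst hj
        rw [hF', Function.update_self, Function.update_of_ne hj', hsupE,
          Set.disjoint_union_left]
        exact ⟨hFv.2.2 j j' hjj', Set.disjoint_singleton_left.mpr (hxyE j')⟩
      · subst hj'
        rw [hF', Function.update_self, Function.update_of_ne hj, hsupE,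
          Set.disjoint_union_right]
        exact ⟨hFv.2.2 j j' hjj', Set.disjoint_singleton_right.mpr (hxyE j)⟩
      · rw [hF', Function.update_of_ne hj, Function.update_of_ne hj']
        exact hFv.2.2 j j' hjj'
  have hcard : ((F i) ⊔ edge x y).edgeSet.ncard = (F i).edgeSet.ncard + 1 := by
    rw [edgeSet_sup, edge_edgeSet_of_ne hadj.ne, Set.union_singleton,
      Set.ncard_insert_of_notMem (hxyE i) (Set.toFinite _)]
  have hup := NWwt_update F i ((F i) ⊔ edge x y)
  have hle := hmax F' hv'
  rw [← hF'] at hup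
  omega

/-- Edges that are unused in some tuple reachable from `F₀`. -/
def NWE0 (G : SimpleGraph V) {ℓ : ℕ} (F₀ : Fin ℓ → SimpleGraph V) : Set (Sym2 V) :=
  {e | e ∈ G.edgeSet ∧ ∃ n F, NWReach G F₀ n F ∧ ∀ j, e ∉ (F j).edgeSet}

/-- Fundamental-path lemma: for an unused edge, there is a path in each forest between its
endpoints all of whose edges are in `NWE0`. -/
lemma fund_path_E0 [Fintype V] {G : SimpleGraph V} {ℓ : ℕ} {F₀ : Fin ℓ → SimpleGraph V}
    (hv : NWValid G F₀) (hmax : ∀ F : Fin ℓ → SimpleGraph V, NWValid G F → NWwt F ≤ NWwt F₀)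
    {n : ℕ} {F : Fin ℓ → SimpleGraph V} (hn : NWReach G F₀ n F)
    {x y : V} (hadj : G.Adj x y) (hun : ∀ j, ¬ (F j).Adj x y) (i : Fin ℓ) :
    ∃ p : (F i).Walk x y, p.IsPath ∧ ∀ f ∈ p.edges, f ∈ NWE0 G F₀ := by
  obtain ⟨hFv, -⟩ := NWReach.valid_wt hv n F hn
  obtain ⟨w⟩ := reach_forest_reachable hv hmax hn hadj hun i
  refine ⟨w.toPath, w.toPath.2, ?_⟩
  intro f hf
  have hfE : f ∈ (F i).edgeSet := (w.toPath : (F i).Walk x y).edges_subset_edgeSet hf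
  refine ⟨edgeSet_mono (hFv.1 i) hfE, n + 1,
    Function.update F i (((F i) ⊔ edge x y).deleteEdges {f}), ⟨F, hn, ?_⟩, ?_⟩
  · exact ⟨i, x, y, w.toPath, f, hadj, hun, w.toPath.2, hf, rfl⟩
  · intro j
    by_cases hj : j = i
    · subst hj
      rw [Function.update_self, exchange_edgeSet hadj.ne]
      intro hmem
      exact hmem.2 rfl
    · rw [Function.update_of_ne hj]
      intro hmem
      exact (hFv.2.2 i j (fun h => hj h.symm)).ne_of_mem hfE hmem rfl

/-- Transfer: a connection via `NWE0`-edges in a reachable tuple can be pulled back to `F₀`. -/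
lemma transfer_down [Fintype V] {G : SimpleGraph V} {ℓ : ℕ} {F₀ : Fin ℓ → SimpleGraph V}
    (hv : NWValid G F₀) (hmax : ∀ F : Fin ℓ → SimpleGraph V, NWValid G F → NWwt F ≤ NWwt F₀) :
    ∀ (n : ℕ) (F : Fin ℓ → SimpleGraph V), NWReach G F₀ n F →
      ∀ (i : Fin ℓ) (x y : V), (∃ q : (F i).Walk x y, ∀ e ∈ q.edges, e ∈ NWE0 G F₀) →
        ∃ q : (F₀ i).Walk x y, ∀ e ∈ q.edges, e ∈ NWE0 G F₀ := by
  intro n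
  induction n with
  | zero =>
    intro F hF i x y h
    rw [show F = F₀ from hF] at h
    exact h
  | succ n ih =>
    rintro F' ⟨F, hn, hstep⟩ i x y ⟨q, hq⟩
    obtain ⟨i₀, a, b, p, f, hG, hunused, hp, hf, rfl⟩ := hstep
    -- replace the walk `q` by a walk in `F i` with edges in `NWE0`.
    have key : ∃ q' : (F i).Walk x y, ∀ e ∈ q'.edges, e ∈ NWE0 G F₀ := by
      by_cases hi : i = i₀
      · subst hi
        apply walk_replace (A := Function.update F i (((F i) ⊔ edge a b).deleteEdges {f}) i)
          (NWE0 G F₀) q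
        intro u v huv hmem
        rw [Function.update_self] at huv
        have huvE := huv
        rw [← mem_edgeSet, exchange_edgeSet hG.ne] at huvE
        rcases huvE.1 with hE | hE
        · exact ⟨Walk.cons ((F i).mem_edgeSet.mp hE) Walk.nil, by
            intro e he
            simp only [Walk.edges_cons, Walk.edges_nil, List.mem_singleton] at he
            subst he
            exact hq _ hmem⟩
        · -- the added edge: use the fundamental path
          obtain ⟨p', hp', hpE⟩ := fund_path_E0 hv hmax hn hG hunused i
          rw [Set.mem_singleton_iff, Sym2.eq_iff] at hE
          rcases hE with ⟨rfl, rfl⟩ | ⟨rfl, rfl⟩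
          · exact ⟨p', hpE⟩
          · exact ⟨p'.reverse, by
              intro e he
              rw [Walk.edges_reverse, List.mem_reverse] at he
              exact hpE e he⟩
      · refine walk_replace (NWE0 G F₀) q ?_
        intro u v huv hmem
        rw [Function.update_of_ne hi] at huv
        exact ⟨Walk.cons huv Walk.nil, by
          intro e he
          simp only [Walk.edges_cons, Walk.edges_nil, List.mem_singleton] at he
          subst he
          exact hq _ hmem⟩
    exact ih F hn i x y key

lemma E0_connects [Fintype V] {G : SimpleGraph V} {ℓ : ℕ} {F₀ : Fin ℓ → SimpleGraph V}
    (hv : NWValid G F₀) (hmax : ∀ F : Fin ℓ → SimpleGraph V, NWValid G F → NWwt F ≤ NWwt F₀)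
    {x y : V} (he : s(x, y) ∈ NWE0 G F₀) (i : Fin ℓ) :
    ∃ q : (F₀ i).Walk x y, ∀ e ∈ q.edges, e ∈ NWE0 G F₀ := by
  obtain ⟨heG, n, F, hn, hun⟩ := he
  have hun' : ∀ j, ¬ (F j).Adj x y := by
    intro j hadj
    exact hun j ((F j).mem_edgeSet.mpr hadj)
  obtain ⟨p, hp, hpE⟩ := fund_path_E0 hv hmax hn (G.mem_edgeSet.mp heG) hun' i
  exact transfer_down hv hmax n F hn i x y ⟨p, hpE⟩

lemma G0_reachable [Fintype V] {G : SimpleGraph V} {ℓ : ℕ} {F₀ : Fin ℓ → SimpleGraph V}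
    (hv : NWValid G F₀) (hmax : ∀ F : Fin ℓ → SimpleGraph V, NWValid G F → NWwt F ≤ NWwt F₀)
    {x y : V} (h : (fromEdgeSet (NWE0 G F₀)).Reachable x y) (i : Fin ℓ) :
    ∃ q : (F₀ i).Walk x y, ∀ e ∈ q.edges, e ∈ NWE0 G F₀ := by
  obtain ⟨w⟩ := h
  refine walk_replace (NWE0 G F₀) w ?_
  intro a b hab _
  rw [fromEdgeSet_adj] at hab
  exact E0_connects hv hmax hab.1 i

/-- **Nash-Williams/Tutte style packing**: if every nonempty proper vertex set has edge cut
of size at least `2ℓ`, then `G` has `ℓ` edge-disjoint spanning trees. -/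
theorem exists_edge_disjoint_spanning_trees [Fintype V] (G : SimpleGraph V)
    (hG : G.Connected) (ℓ : ℕ)
    (hcut : ∀ A : Set V, A.Nonempty → Aᶜ.Nonempty →
      2 * ℓ ≤ {e | e ∈ G.edgeSet ∧ (∃ v ∈ e, v ∈ A) ∧ ∃ v ∈ e, v ∉ A}.ncard) :
    ∃ F : Fin ℓ → SimpleGraph V, (∀ i, F i ≤ G) ∧
      (∀ i, (F i).Connected ∧ (F i).IsAcyclic) ∧
      (∀ i j, i ≠ j → Disjoint (F i).edgeSet (F j).edgeSet) := by
  rcases Nat.eq_zero_or_pos ℓ with rfl | hℓ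
  · exact ⟨fun _ => ⊥, fun i => i.elim0, fun i => i.elim0, fun i j _ => i.elim0⟩
  have hV : Nonempty V := hG.nonempty
  obtain ⟨F₀, hv, hmax⟩ := exists_max_valid G ℓ
  refine ⟨F₀, hv.1, fun i => ⟨?_, hv.2.1 i⟩, hv.2.2⟩
  rw [connected_iff]
  refine ⟨?_, hV⟩
  by_contra hpre
  rw [Preconnected] at hpre
  push_neg at hpre
  obtain ⟨x, y, hxy⟩ := hpre
  set G0 := fromEdgeSet (NWE0 G F₀) with hG0
  have hG0r : ¬ G0.Reachable x y := by
    intro h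
    obtain ⟨q, -⟩ := G0_reachable hv hmax h i
    exact hxy q.reachable
  -- the component partition of `G0`
  have hcompne : ∀ C : G0.ConnectedComponent, C.supp.Nonempty := by
    intro C
    obtain ⟨v, hv⟩ := C.exists_rep
    exact ⟨v, by rwa [ConnectedComponent.mem_supp_iff]⟩
  have hcompproper : ∀ C : G0.ConnectedComponent, C.suppᶜ.Nonempty := by
    intro C
    by_cases hx : x ∈ C.supp
    · refine ⟨y, fun hy : y ∈ C.supp => ?_⟩
      rw [ConnectedComponent.mem_supp_iff] at hx hy
      exact hG0r (ConnectedComponent.exact (hx.trans hy.symm))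
    · exact ⟨x, hx⟩
  classical
  -- sets
  set cutS : G0.ConnectedComponent → Set (Sym2 V) := fun C =>
    {e | e ∈ G.edgeSet ∧ (∃ v ∈ e, v ∈ C.supp) ∧ ∃ v ∈ e, v ∉ C.supp} with hcutS
  set crossS : Set (Sym2 V) :=
    {e | e ∈ G.edgeSet ∧ ∃ v ∈ e, ∃ w ∈ e,
      G0.connectedComponentMk v ≠ G0.connectedComponentMk w} with hcrossS
  set insideS : Fin ℓ → G0.ConnectedComponent → Set (Sym2 V) := fun i C =>
    {e | e ∈ (F₀ i).edgeSet ∧ ∀ v ∈ e, v ∈ C.supp} with hinsideS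
  have hcut2 : ∀ C, 2 * ℓ ≤ (cutS C).ncard := fun C =>
    hcut C.supp (hcompne C) (hcompproper C)
  have hcross_ab : ∀ a b : V, s(a, b) ∈ crossS ↔ s(a, b) ∈ G.edgeSet ∧
      G0.connectedComponentMk a ≠ G0.connectedComponentMk b := by
    intro a b
    simp only [hcrossS, Set.mem_setOf_eq]
    constructor
    · rintro ⟨hE, v, hv, w, hw, hne⟩
      refine ⟨hE, ?_⟩
      rcases Sym2.mem_iff.mp hv with rfl | rfl <;> rcases Sym2.mem_iff.mp hw with rfl | rfl
      · exact absurd rfl hne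
      · exact hne
      · exact hne.symm
      · exact absurd rfl hne
    · rintro ⟨hE, hne⟩
      exact ⟨hE, a, by simp, b, by simp, hne⟩
  have hcutsub : ∀ C, cutS C ⊆ crossS := by
    intro C e he
    obtain ⟨heG, ⟨v, hv, hvC⟩, ⟨w, hw, hwC⟩⟩ := he
    refine ⟨heG, v, hv, w, hw, ?_⟩
    rw [ConnectedComponent.mem_supp_iff] at hvC
    intro h
    apply hwC
    rw [ConnectedComponent.mem_supp_iff, ← h, hvC]
  -- Finset versions
  set crossFin : Finset (Sym2 V) := (Set.toFinite crossS).toFinset with hcrossFin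
  have hcrossFin_mem : ∀ e, e ∈ crossFin ↔ e ∈ crossS := by
    intro e; rw [hcrossFin, Set.Finite.mem_toFinset]
  -- (F2) double counting of cut edges
  have hfilter2 : ∀ e ∈ crossFin,
      (Finset.univ.filter (fun C : G0.ConnectedComponent => e ∈ cutS C)).card = 2 := by
    intro e he
    rw [hcrossFin_mem] at he
    induction e using Sym2.ind with
    | _ a b =>
      obtain ⟨hE, hne⟩ := (hcross_ab a b).mp he
      have hset : (Finset.univ.filter (fun C : G0.ConnectedComponent => s(a, b) ∈ cutS C))
          = {G0.connectedComponentMk a, G0.connectedComponentMk b} := by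
        ext C
        simp only [Finset.mem_filter, Finset.mem_univ, true_and, Finset.mem_insert,
          Finset.mem_singleton]
        constructor
        · rintro ⟨-, ⟨v, hv, hvC⟩, -⟩
          rw [ConnectedComponent.mem_supp_iff] at hvC
          rcases Sym2.mem_iff.mp hv with rfl | rfl
          · exact Or.inl hvC.symm
          · exact Or.inr hvC.symm
        · rintro (rfl | rfl)
          · refine ⟨hE, ⟨a, by simp, by rw [ConnectedComponent.mem_supp_iff]⟩,
              ⟨b, by simp, ?_⟩⟩
            rw [ConnectedComponent.mem_supp_iff]
            exact fun h => hne h.symm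
          · refine ⟨hE, ⟨b, by simp, by rw [ConnectedComponent.mem_supp_iff]⟩,
              ⟨a, by simp, ?_⟩⟩
            rw [ConnectedComponent.mem_supp_iff]
            exact hne
      rw [hset]
      exact Finset.card_pair hne
  have hdouble : ∑ C : G0.ConnectedComponent, (cutS C).ncard = 2 * crossS.ncard := by
    have hcutfin : ∀ C : G0.ConnectedComponent,
        (cutS C).ncard = (crossFin.filter (fun e => e ∈ cutS C)).card := by
      intro C
      rw [Set.ncard_eq_toFinset_card _ (Set.toFinite _)]
      congr 1
      ext e
      simp only [Set.Finite.mem_toFinset, Finset.mem_filter, hcrossFin_mem e]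
      exact ⟨fun h => ⟨hcutsub C h, h⟩, fun h => h.2⟩
    calc ∑ C : G0.ConnectedComponent, (cutS C).ncard
        = ∑ C : G0.ConnectedComponent, ∑ e ∈ crossFin, if e ∈ cutS C then 1 else 0 := by
          refine Finset.sum_congr rfl (fun C _ => ?_)
          rw [hcutfin C, Finset.card_filter]
      _ = ∑ e ∈ crossFin, ∑ C : G0.ConnectedComponent, if e ∈ cutS C then 1 else 0 :=
          Finset.sum_comm
      _ = ∑ e ∈ crossFin, (Finset.univ.filter
            (fun C : G0.ConnectedComponent => e ∈ cutS C)).card := by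
          refine Finset.sum_congr rfl (fun e _ => ?_)
          rw [Finset.card_filter]
      _ = ∑ _e ∈ crossFin, 2 := Finset.sum_congr rfl hfilter2
      _ = 2 * crossS.ncard := by
          rw [Finset.sum_const, smul_eq_mul, mul_comm,
            Set.ncard_eq_toFinset_card _ (Set.toFinite _)]
  -- (F3) every cross edge is used by some forest
  have hcross_used : ∀ e, e ∈ crossS → (∀ i, e ∉ (F₀ i).edgeSet) → False := by
    intro e
    induction e using Sym2.ind with
    | _ a b =>
      intro he hun
      have heE0 : s(a, b) ∈ NWE0 G F₀ := ⟨he.1, 0, F₀, rfl, hun⟩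
      have hadj : G0.Adj a b := by
        rw [hG0, fromEdgeSet_adj]
        exact ⟨heE0, (G.mem_edgeSet.mp he.1).ne⟩
      obtain ⟨-, hne⟩ := (hcross_ab a b).mp he
      exact hne (ConnectedComponent.sound hadj.reachable)
  -- (F7) components partition the vertices
  have hsum_supp : ∑ C : G0.ConnectedComponent, C.supp.ncard = Fintype.card V := by
    have huniv : (Finset.univ : Finset V) = Finset.univ.biUnion
        (fun C : G0.ConnectedComponent => (Set.toFinite C.supp).toFinset) := by
      ext v
      simp only [Finset.mem_univ, true_iff, Finset.mem_biUnion, Set.Finite.mem_toFinset]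
      exact ⟨G0.connectedComponentMk v, trivial, rfl⟩
    have hdisj : ∀ C ∈ (Finset.univ : Finset G0.ConnectedComponent),
        ∀ D ∈ (Finset.univ : Finset G0.ConnectedComponent), C ≠ D →
        Disjoint (Set.toFinite C.supp).toFinset (Set.toFinite D.supp).toFinset := by
      intro C _ D _ hCD
      rw [Finset.disjoint_left]
      intro v hvC hvD
      rw [Set.Finite.mem_toFinset, ConnectedComponent.mem_supp_iff] at hvC hvD
      exact hCD (hvC ▸ hvD ▸ rfl)
    have := Finset.card_biUnion hdisj
    rw [← huniv, Finset.card_univ] at this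
    rw [this]
    exact Finset.sum_congr rfl fun C _ =>
      (Set.ncard_eq_toFinset_card _ (Set.toFinite _))
  -- (F5) each component spans a connected subgraph of each forest
  have hinside : ∀ (j : Fin ℓ) (C : G0.ConnectedComponent),
      C.supp.ncard ≤ (insideS j C).ncard + 1 := by
    intro j C
    have hsne : Nonempty ↥C.supp := (hcompne C).to_subtype
    have hconn : ((F₀ j).induce C.supp).Connected := by
      rw [connected_iff]
      refine ⟨?_, hsne⟩
      intro u v
      have hmkuv : G0.Reachable ↑u ↑v := by
        apply ConnectedComponent.exact
        rw [(ConnectedComponent.mem_supp_iff _ _).mp u.2,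
          (ConnectedComponent.mem_supp_iff _ _).mp v.2]
      obtain ⟨q, hq⟩ := G0_reachable hv hmax hmkuv j
      have hsupp : ∀ z ∈ q.support, z ∈ C.supp := by
        intro z hz
        have hreach : (fromEdgeSet (NWE0 G F₀)).Reachable ↑u z :=
          walk_support_reachable q hq z hz
        rw [ConnectedComponent.mem_supp_iff, ← (ConnectedComponent.mem_supp_iff C ↑u).mp u.2]
        exact ConnectedComponent.sound hreach.symm
      obtain ⟨q'⟩ := walk_induce q hsupp
      exact ⟨q'.copy (Subtype.ext rfl) (Subtype.ext rfl)⟩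
    have hC1 := card_le_ncard_edgeSet_of_connected hconn
    have hcard : Fintype.card ↥C.supp = C.supp.ncard := by
      rw [← Nat.card_coe_set_eq, Nat.card_eq_fintype_card]
    have hmap : ((F₀ j).induce C.supp).edgeSet.ncard ≤ (insideS j C).ncard := by
      refine Set.ncard_le_ncard_of_injOn (Sym2.map Subtype.val) ?_ ?_ (Set.toFinite _)
      · intro e he
        induction e using Sym2.ind with
        | _ u v =>
          rw [mem_edgeSet, comap_adj] at he
          refine ⟨he, ?_⟩
          intro w hw
          rw [Sym2.map_pair_eq, Sym2.mem_iff] at hw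
          rcases hw with rfl | rfl
          · exact u.2
          · exact v.2
      · exact (Sym2.map.injective Subtype.val_injective).injOn
    omega
  -- (F4) decomposition of each forest's edges
  have hEfin : ∀ j : Fin ℓ, ((F₀ j).edgeSet).ncard
      = ((Set.toFinite ((F₀ j).edgeSet)).toFinset).card := fun j =>
    Set.ncard_eq_toFinset_card _ _
  have hdecomp : ∀ j : Fin ℓ, ((F₀ j).edgeSet).ncard
      = (∑ C : G0.ConnectedComponent, (insideS j C).ncard)
        + (((Set.toFinite ((F₀ j).edgeSet)).toFinset).filter (fun e => e ∈ crossS)).card := by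
    intro j
    set Ej := (Set.toFinite ((F₀ j).edgeSet)).toFinset with hEj
    have hsplit := Finset.card_filter_add_card_filter_not
      (s := Ej) (p := fun e => e ∈ crossS)
    have hnoncross : Ej.filter (fun e => ¬ e ∈ crossS)
        = Finset.univ.biUnion (fun C : G0.ConnectedComponent =>
            (Set.toFinite (insideS j C)).toFinset) := by
      ext e
      induction e using Sym2.ind with
      | _ a b =>
        simp only [Finset.mem_filter, Finset.mem_biUnion, Set.Finite.mem_toFinset,
          Finset.mem_univ, true_and, hEj]
        constructor
        · rintro ⟨hmem, hncross⟩
          have haG : s(a, b) ∈ G.edgeSet := edgeSet_mono (hv.1 j) hmem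
          have heq : G0.connectedComponentMk a = G0.connectedComponentMk b := by
            by_contra hne
            exact hncross ((hcross_ab a b).mpr ⟨haG, hne⟩)
          refine ⟨G0.connectedComponentMk a, hmem, ?_⟩
          intro w hw
          rcases Sym2.mem_iff.mp hw with rfl | rfl
          · exact rfl
          · rw [ConnectedComponent.mem_supp_iff]
            exact heq.symm
        · rintro ⟨C, hmem, hends⟩
          refine ⟨hmem, ?_⟩
          intro hcross
          obtain ⟨-, hne⟩ := (hcross_ab a b).mp hcross
          have ha := hends a (by simp)
          have hb := hends b (by simp)
          rw [ConnectedComponent.mem_supp_iff] at ha hb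
          exact hne (ha.trans hb.symm)
    have hdisjC : ∀ C ∈ (Finset.univ : Finset G0.ConnectedComponent),
        ∀ D ∈ (Finset.univ : Finset G0.ConnectedComponent), C ≠ D →
        Disjoint (Set.toFinite (insideS j C)).toFinset
          (Set.toFinite (insideS j D)).toFinset := by
      intro C _ D _ hCD
      rw [Finset.disjoint_left]
      intro e heC heD
      rw [Set.Finite.mem_toFinset] at heC heD
      induction e using Sym2.ind with
      | _ a b =>
        have h1 := heC.2 a (by simp)
        have h2 := heD.2 a (by simp)
        rw [ConnectedComponent.mem_supp_iff] at h1 h2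
        exact hCD (h1 ▸ h2 ▸ rfl)
    rw [hEfin j, ← hsplit, hnoncross, Finset.card_biUnion hdisjC]
    have : ∀ C : G0.ConnectedComponent, ((Set.toFinite (insideS j C)).toFinset).card
        = (insideS j C).ncard := fun C => (Set.ncard_eq_toFinset_card _ _).symm
    rw [Finset.sum_congr rfl (fun C _ => this C)]
    omega
  -- (F6) cross edges distribute over the forests
  have hcross_sum : crossS.ncard = ∑ j : Fin ℓ,
      (((Set.toFinite ((F₀ j).edgeSet)).toFinset).filter (fun e => e ∈ crossS)).card := by
    have hcrossUnion : crossFin = Finset.univ.biUnion (fun j : Fin ℓ =>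
        ((Set.toFinite ((F₀ j).edgeSet)).toFinset).filter (fun e => e ∈ crossS)) := by
      ext e
      simp only [hcrossFin_mem, Finset.mem_biUnion, Finset.mem_filter,
        Set.Finite.mem_toFinset, Finset.mem_univ, true_and]
      constructor
      · intro he
        by_contra hcon
        push_neg at hcon
        exact hcross_used e he (fun j hj => (hcon j hj) he)
      · rintro ⟨j, -, he⟩
        exact he
    have hdisjF : ∀ a ∈ (Finset.univ : Finset (Fin ℓ)),
        ∀ b ∈ (Finset.univ : Finset (Fin ℓ)), a ≠ b →
        Disjoint (((Set.toFinite ((F₀ a).edgeSet)).toFinset).filter (fun e => e ∈ crossS))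
          (((Set.toFinite ((F₀ b).edgeSet)).toFinset).filter (fun e => e ∈ crossS)) := by
      intro a _ b _ hab
      rw [Finset.disjoint_left]
      intro e hea heb
      rw [Finset.mem_filter, Set.Finite.mem_toFinset] at hea heb
      exact (hv.2.2 a b hab).ne_of_mem hea.1 heb.1 rfl
    rw [Set.ncard_eq_toFinset_card _ (Set.toFinite _), ← hcrossFin, hcrossUnion,
      Finset.card_biUnion hdisjF]
  -- (F8) forests have at most `n - 1` edges
  have hforest_le : ∀ j : Fin ℓ, ((F₀ j).edgeSet).ncard + 1 ≤ Fintype.card V := fun j =>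
    ncard_edgeSet_le_of_acyclic (hv.2.1 j)
  -- final arithmetic
  set n := Fintype.card V with hn
  set p := Fintype.card G0.ConnectedComponent with hp
  set X := ∑ j : Fin ℓ, ∑ C : G0.ConnectedComponent, (insideS j C).ncard with hX
  set B := crossS.ncard with hB
  have h1 : ℓ * n ≤ X + ℓ * p := by
    have hper : ∀ j : Fin ℓ, n ≤ (∑ C : G0.ConnectedComponent, (insideS j C).ncard) + p := by
      intro j
      calc n = ∑ C : G0.ConnectedComponent, C.supp.ncard := hsum_supp.symm
        _ ≤ ∑ C : G0.ConnectedComponent, ((insideS j C).ncard + 1) :=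
            Finset.sum_le_sum (fun C _ => hinside j C)
        _ = (∑ C : G0.ConnectedComponent, (insideS j C).ncard) + p := by
            rw [Finset.sum_add_distrib, Finset.sum_const, smul_eq_mul, mul_one,
              Finset.card_univ]
    calc ℓ * n = ∑ _j : Fin ℓ, n := by simp [Finset.sum_const, Finset.card_univ, mul_comm]
      _ ≤ ∑ j : Fin ℓ, ((∑ C : G0.ConnectedComponent, (insideS j C).ncard) + p) :=
          Finset.sum_le_sum (fun j _ => hper j)
      _ = X + ℓ * p := by
          rw [Finset.sum_add_distrib, Finset.sum_const, smul_eq_mul, Finset.card_univ,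
            Fintype.card_fin]
  have h2 : ℓ * p ≤ B := by
    have : ∑ _C : G0.ConnectedComponent, 2 * ℓ ≤ ∑ C : G0.ConnectedComponent, (cutS C).ncard :=
      Finset.sum_le_sum (fun C _ => hcut2 C)
    rw [hdouble, Finset.sum_const, smul_eq_mul, Finset.card_univ] at this
    rw [hB]
    nlinarith [this]
  have h3 : NWwt F₀ = X + B := by
    unfold NWwt
    rw [hX, hcross_sum, ← Finset.sum_add_distrib]
    exact Finset.sum_congr rfl (fun j _ => hdecomp j)
  have h4 : NWwt F₀ + ℓ ≤ ℓ * n := by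
    unfold NWwt
    calc (∑ j : Fin ℓ, ((F₀ j).edgeSet).ncard) + ℓ
        = ∑ j : Fin ℓ, (((F₀ j).edgeSet).ncard + 1) := by
          rw [Finset.sum_add_distrib, Finset.sum_const, smul_eq_mul, mul_one,
            Finset.card_univ, Fintype.card_fin]
      _ ≤ ∑ _j : Fin ℓ, n := Finset.sum_le_sum (fun j _ => hforest_le j)
      _ = ℓ * n := by simp [Finset.sum_const, Finset.card_univ, mul_comm]
  omega

lemma isAcyclic_of_iso {W : Type*} {A : SimpleGraph V} {B : SimpleGraph W} (e : A ≃g B)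
    (hA : A.IsAcyclic) : B.IsAcyclic := by
  intro v c hc
  exact hA (c.map e.symm.toHom)
    ((Walk.map_isCycle_iff_of_injective (e.symm.toEquiv.injective)).mpr hc)

lemma toSubgraph_coe_isTree {G H : SimpleGraph V} (hle : H ≤ G) (hc : H.Connected)
    (ha : H.IsAcyclic) : (SimpleGraph.toSubgraph H hle).coe.IsTree := by
  have e := SimpleGraph.Subgraph.spanningCoeEquivCoeOfSpanning (SimpleGraph.toSubgraph H hle)
    (SimpleGraph.toSubgraph.isSpanning H hle)
  have hsc : (SimpleGraph.toSubgraph H hle).spanningCoe = H := rfl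
  constructor
  · exact (SimpleGraph.Iso.connected_iff e).mp (by rw [hsc]; exact hc)
  · exact isAcyclic_of_iso e (by rw [hsc]; exact ha)

lemma toSubgraph_edgeSet {G H : SimpleGraph V} (hle : H ≤ G) :
    (SimpleGraph.toSubgraph H hle).edgeSet = H.edgeSet := by
  ext e
  induction e using Sym2.ind with
  | _ a b => rw [SimpleGraph.Subgraph.mem_edgeSet, mem_edgeSet]; rfl

lemma walk_stays {G : SimpleGraph V} {A : Set V} :
    ∀ {u z : V}
      (_ : (G.deleteEdges {e | e ∈ G.edgeSet ∧ (∃ v ∈ e, v ∈ A) ∧ ∃ v ∈ e, v ∉ A}).Walk u z),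
      u ∈ A → z ∈ A
  | _, _, Walk.nil, h => h
  | u, z, Walk.cons (v := m) hadj w, hu => by
    rw [deleteEdges_adj] at hadj
    by_cases hm : m ∈ A
    · exact walk_stays w hm
    · exact absurd ⟨hadj.1, ⟨u, by simp, hu⟩, ⟨m, by simp, hm⟩⟩ hadj.2

lemma walk_exists_adj {A : SimpleGraph V} :
    ∀ {u v : V} (_ : A.Walk u v), u ≠ v → ∃ x y, A.Adj x y
  | _, _, Walk.nil, h => absurd rfl h
  | _, _, Walk.cons h _, _ => ⟨_, _, h⟩


end NWAux

theorem stmt5 {V : Type*} [Fintype V] (G : SimpleGraph V) (hG : G.Connected) (k : ℕ)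
    (hk : 3 ≤ k) (hkn : k ≤ Fintype.card V) :
    edgeConn G / 2 ≤ genLambda G k := by
  set ℓ := edgeConn G / 2 with hℓdef
  rw [genLambda, if_pos hG]
  have hVne : Nonempty V := hG.nonempty
  have hcut : ∀ A : Set V, A.Nonempty → Aᶜ.Nonempty →
      2 * ℓ ≤ {e | e ∈ G.edgeSet ∧ (∃ v ∈ e, v ∈ A) ∧ ∃ v ∈ e, v ∉ A}.ncard := by
    intro A hA hAc
    have h1 : edgeConn G ≤
        {e | e ∈ G.edgeSet ∧ (∃ v ∈ e, v ∈ A) ∧ ∃ v ∈ e, v ∉ A}.ncard := by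
      apply Nat.sInf_le
      refine ⟨_, fun e he => he.1, rfl, ?_⟩
      intro hconn
      obtain ⟨a, haA⟩ := hA
      obtain ⟨b, hbA⟩ := hAc
      obtain ⟨w⟩ := hconn.preconnected a b
      exact hbA (walk_stays w haA)
    omega
  obtain ⟨F, hFle, hFtree, hFdisj⟩ := exists_edge_disjoint_spanning_trees G hG ℓ hcut
  apply le_csInf
  · obtain ⟨S, -, hScard⟩ := Finset.exists_subset_card_eq
      (s := (Finset.univ : Finset V)) (n := k) (by simpa using hkn)
    exact ⟨steinerLambda G ↑S, S, hScard, rfl⟩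
  · rintro m ⟨S, hScard, rfl⟩
    letI : Fintype ↥G.edgeSet := (Set.toFinite _).fintype
    have hbdd : ∀ n ∈ {n | ∃ T : Fin n → G.Subgraph, (∀ i, IsSteinerTree G ↑S (T i)) ∧
        ∀ i j, i ≠ j → (T i).edgeSet ∩ (T j).edgeSet = ∅},
        n ≤ Fintype.card ↥G.edgeSet := by
      rintro n ⟨T, hT, hdisj⟩
      obtain ⟨a, haS, b, hbS, hab⟩ := Finset.one_lt_card.mp (by omega : 1 < S.card)
      have hedge : ∀ i, ∃ e, e ∈ (T i).edgeSet := by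
        intro i
        have hSv := (hT i).1
        have htree := (hT i).2
        have haV : (a : V) ∈ (T i).verts := hSv (Finset.mem_coe.mpr haS)
        have hbV : (b : V) ∈ (T i).verts := hSv (Finset.mem_coe.mpr hbS)
        obtain ⟨w⟩ := htree.isConnected.preconnected ⟨a, haV⟩ ⟨b, hbV⟩
        obtain ⟨x, y, hxy⟩ := walk_exists_adj w (by simp [Subtype.ext_iff]; exact hab)
        exact ⟨s((x : V), (y : V)), SimpleGraph.Subgraph.mem_edgeSet.mpr hxy⟩
      choose f hf using hedge
      have hinj : Function.Injective
          (fun i : Fin n => (⟨f i, (T i).edgeSet_subset (hf i)⟩ : ↥G.edgeSet)) := by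
        intro i j hij
        by_contra hne
        have h0 := hdisj i j hne
        simp only [Subtype.mk.injEq] at hij
        have hmem : f i ∈ (T i).edgeSet ∩ (T j).edgeSet := ⟨hf i, hij ▸ hf j⟩
        rw [h0] at hmem
        exact hmem
      simpa using Fintype.card_le_of_injective _ hinj
    apply le_csSup ⟨_, hbdd⟩
    refine ⟨fun i => SimpleGraph.toSubgraph (F i) (hFle i), ?_, ?_⟩
    · intro i
      constructor
      · rw [SimpleGraph.toSubgraph_verts]
        exact Set.subset_univ _
      · exact toSubgraph_coe_isTree _ (hFtree i).1 (hFtree i).2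
    · intro i j hij
      rw [toSubgraph_edgeSet, toSubgraph_edgeSet]
      exact Set.disjoint_iff_inter_eq_empty.mp (hFdisj i j hij)
end

section
/- For every connected graph G of order n ≥ 6 and every k with 3 ≤ k ≤ 6, κ_k(G) ≤ κ(G). -/
open SimpleGraph
open scoped Classical

section Aux
variable {V : Type*} {G : SimpleGraph V}


lemma aux_exists_adj {S : Set V} {T : G.Subgraph} (hT : IsSteinerTree G S T)
    {u v : V} (hu : u ∈ S) (hv : v ∈ S) (hne : u ≠ v) : ∃ w, T.Adj u w := by
  obtain ⟨p⟩ := hT.2.isConnected.preconnected ⟨u, hT.1 hu⟩ ⟨v, hT.1 hv⟩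
  have hnil : ¬ p.Nil := SimpleGraph.Walk.not_nil_of_ne (by simpa using hne)
  have h := SimpleGraph.Walk.adj_snd hnil
  rw [SimpleGraph.Subgraph.coe_adj] at h
  exact ⟨_, h⟩

lemma aux_crossing {S : Set V} {T : G.Subgraph} (hT : IsSteinerTree G S T)
    (A : Set V) {u v : V} (hu : u ∈ S) (hv : v ∈ S) (huA : u ∈ A) (hvA : v ∉ A) :
    ∃ x y, T.Adj x y ∧ x ∈ A ∧ y ∉ A := by
  obtain ⟨p⟩ := hT.2.isConnected.preconnected ⟨u, hT.1 hu⟩ ⟨v, hT.1 hv⟩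
  obtain ⟨d, _, h1, h2⟩ := p.exists_boundary_dart (Subtype.val ⁻¹' A) huA hvA
  have hadj := d.adj
  rw [SimpleGraph.Subgraph.coe_adj] at hadj
  exact ⟨_, _, hadj, h1, h2⟩

lemma aux_walk_closed {C W : Set V}
    (hclose : ∀ z ∈ W, ∀ w, G.Adj z w → w ∉ C → w ∈ W) :
    ∀ {u v : V} (p : G.Walk u v), (∀ z ∈ p.support, z ∉ C) → u ∈ W → v ∈ W := by
  intro u v p
  induction p with
  | nil => exact fun _ h => h
  | @cons u u2 v h q ih =>
    intro hsup hu
    refine ih (fun z hz => hsup z (by simp [hz])) (hclose _ hu _ h ?_)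
    exact hsup u2 (by simp [SimpleGraph.Walk.support_cons, q.start_mem_support])

lemma aux_tree_meets_cut {S : Set V} {T : G.Subgraph} (hT : IsSteinerTree G S T)
    {C W : Set V} (hclose : ∀ z ∈ W, ∀ w, G.Adj z w → w ∉ C → w ∈ W)
    {a b : V} (ha : a ∈ S) (hb : b ∈ S) (haW : a ∈ W) (hbW : b ∉ W) :
    ∃ c ∈ C, c ∈ T.verts := by
  obtain ⟨p⟩ := hT.2.isConnected.preconnected ⟨a, hT.1 ha⟩ ⟨b, hT.1 hb⟩
  by_contra hcon
  push_neg at hcon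
  have hsup : ∀ z ∈ (p.map T.hom).support, z ∉ C := by
    intro z hz hzC
    rw [SimpleGraph.Walk.support_map] at hz
    obtain ⟨z', _, rfl⟩ := List.mem_map.mp hz
    exact hcon _ hzC z'.2
  exact hbW (aux_walk_closed hclose (p.map T.hom) hsup haW)

lemma aux_reach_induce {C : Set V} :
    ∀ {u v : V} (p : G.Walk u v), (∀ z ∈ p.support, z ∉ C) →
      ∀ (hu : u ∈ Cᶜ) (hv : v ∈ Cᶜ), (G.induce Cᶜ).Reachable ⟨u, hu⟩ ⟨v, hv⟩ := by
  intro u v p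
  induction p with
  | nil => intro _ hu hv; exact Reachable.refl _
  | @cons u u2 v h q ih =>
    intro hsup hu hv
    have hu2 : u2 ∈ Cᶜ := hsup u2 (by simp [SimpleGraph.Walk.support_cons, q.start_mem_support])
    have hadj : (G.induce Cᶜ).Adj ⟨u, hu⟩ ⟨u2, hu2⟩ := by simp [h]
    exact hadj.reachable.trans (ih (fun z hz => hsup z (by simp [hz])) hu2 hv)

lemma aux_count {t : ℕ} (T : Fin t → G.Subgraph)
    (hdisj : ∀ i j, i ≠ j → (T i).edgeSet ∩ (T j).edgeSet = ∅)
    (P : Finset (Sym2 V)) (c : ℕ)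
    (hP : ∀ i, c ≤ (P.filter (fun e => e ∈ (T i).edgeSet)).card) :
    t * c ≤ P.card := by
  classical
  have hd : ∀ i ∈ (Finset.univ : Finset (Fin t)), ∀ j ∈ Finset.univ, i ≠ j →
      Disjoint (P.filter (fun e => e ∈ (T i).edgeSet)) (P.filter (fun e => e ∈ (T j).edgeSet)) := by
    intro i _ j _ hij
    rw [Finset.disjoint_left]
    intro e he1 he2
    have h1 := (Finset.mem_filter.mp he1).2
    have h2 := (Finset.mem_filter.mp he2).2
    have h3 := hdisj i j hij
    exact absurd (Set.mem_inter h1 h2) (by rw [h3]; exact Set.notMem_empty e)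
  calc t * c = ∑ _i : Fin t, c := by simp [mul_comm]
    _ ≤ ∑ i : Fin t, (P.filter (fun e => e ∈ (T i).edgeSet)).card :=
        Finset.sum_le_sum (fun i _ => hP i)
    _ = (Finset.univ.biUnion (fun i => P.filter (fun e => e ∈ (T i).edgeSet))).card :=
        (Finset.card_biUnion hd).symm
    _ ≤ P.card := Finset.card_le_card (Finset.biUnion_subset.mpr (fun i _ => Finset.filter_subset _ _))

variable [Fintype V]


lemma aux_smallSide (C A S : Finset V)
    (hclose : ∀ z ∈ A, ∀ w, G.Adj z w → w ∈ C ∨ w ∈ A)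
    (hAS : A ⊆ S) (hAne : A.Nonempty) (hA2 : A.card ≤ 2) (hlt : A.card < S.card)
    {t : ℕ} (T : Fin t → G.Subgraph)
    (hT : ∀ i, IsSteinerTree G ↑S (T i))
    (hdisj : ∀ i j, i ≠ j → (T i).edgeSet ∩ (T j).edgeSet = ∅) :
    t ≤ C.card := by
  classical
  -- a vertex of S outside A
  have hsd : (S \ A).Nonempty := by
    rw [← Finset.card_pos, Finset.card_sdiff_of_subset hAS]
    omega
  obtain ⟨s, hs⟩ := hsd
  rw [Finset.mem_sdiff] at hs
  set P : Finset (Sym2 V) := G.edgeFinset.filter (fun e => ∃ z ∈ A, z ∈ e) with hP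
  have hedge_mem : ∀ (i : Fin t) (x y : V), (T i).Adj x y → x ∈ A →
      s(x, y) ∈ P.filter (fun e => e ∈ (T i).edgeSet) := by
    intro i x y hadj hxA
    rw [Finset.mem_filter, hP, Finset.mem_filter]
    exact ⟨⟨(SimpleGraph.mem_edgeFinset).mpr ((T i).edgeSet_subset
        ((SimpleGraph.Subgraph.mem_edgeSet).mpr hadj)), ⟨x, hxA, Sym2.mem_mk_left x y⟩⟩,
      (SimpleGraph.Subgraph.mem_edgeSet).mpr hadj⟩
  interval_cases hq : A.card
  · exact absurd hq (by simpa [Finset.card_eq_zero] using hAne.ne_empty)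
  · -- A = {a}
    obtain ⟨a, rfl⟩ := Finset.card_eq_one.mp hq
    have hbound : ∀ i : Fin t, 1 ≤ (P.filter (fun e => e ∈ (T i).edgeSet)).card := by
      intro i
      have hane : a ≠ s := fun h => hs.2 (h ▸ Finset.mem_singleton_self a)
      obtain ⟨w, hw⟩ := aux_exists_adj (hT i) (Finset.mem_coe.mpr (hAS (Finset.mem_singleton_self a)))
        (Finset.mem_coe.mpr hs.1) hane
      exact Finset.card_pos.mpr ⟨_, hedge_mem i a w hw (Finset.mem_singleton_self a)⟩
    have h1 := aux_count T hdisj P 1 hbound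
    have hPsub : P ⊆ C.image (fun w => s(a, w)) := by
      intro e he
      rw [hP, Finset.mem_filter] at he
      obtain ⟨he1, z, hz, hze⟩ := he
      rw [Finset.mem_singleton] at hz
      subst hz
      induction e with
      | _ x y =>
        have hadj : G.Adj x y := (SimpleGraph.mem_edgeFinset).mp he1
        rw [Sym2.mem_iff] at hze
        rcases hze with rfl | rfl
        · rcases hclose z (Finset.mem_singleton_self z) y hadj with h | h
          · exact Finset.mem_image.mpr ⟨y, h, rfl⟩
          · exact absurd (Finset.mem_singleton.mp h).symm hadj.ne
        · rcases hclose z (Finset.mem_singleton_self z) x hadj.symm with h | h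
          · exact Finset.mem_image.mpr ⟨x, h, Sym2.eq_swap⟩
          · exact absurd (Finset.mem_singleton.mp h) hadj.ne
    calc t = t * 1 := by ring
      _ ≤ P.card := h1
      _ ≤ (C.image (fun w => s(a, w))).card := Finset.card_le_card hPsub
      _ ≤ C.card := Finset.card_image_le
  · -- A = {a, a'}
    obtain ⟨a, a', hne, rfl⟩ := Finset.card_eq_two.mp hq
    have hbound : ∀ i : Fin t, 2 ≤ (P.filter (fun e => e ∈ (T i).edgeSet)).card := by
      intro i
      have haS : a ∈ (↑S : Set V) := Finset.mem_coe.mpr (hAS (by simp))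
      have hsS : s ∈ (↑S : Set V) := Finset.mem_coe.mpr hs.1
      obtain ⟨x, y, hxy, hxA, hyA⟩ := aux_crossing (hT i) (↑({a, a'} : Finset V) : Set V)
        haS hsS (by simp) (fun h => hs.2 (Finset.mem_coe.mp h))
      obtain ⟨x', hx'A, hx'x⟩ := Finset.exists_mem_ne (by rw [hq]; norm_num) x
      have hx'S : x' ∈ (↑S : Set V) := Finset.mem_coe.mpr (hAS hx'A)
      have hx's : x' ≠ s := fun h => hs.2 (h ▸ hx'A)
      obtain ⟨w', hw'⟩ := aux_exists_adj (hT i) hx'S hsS hx's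
      have he1 := hedge_mem i x y hxy (Finset.mem_coe.mp hxA)
      have he2 := hedge_mem i x' w' hw' hx'A
      refine Finset.one_lt_card.mpr ⟨_, he1, _, he2, ?_⟩
      intro hcon
      have : x' ∈ s(x, y) := hcon ▸ Sym2.mem_mk_left x' w'
      rw [Sym2.mem_iff] at this
      rcases this with rfl | rfl
      · exact hx'x rfl
      · exact hyA hx'A
    have h2 := aux_count T hdisj P 2 hbound
    have hPsub : P ⊆ insert s(a, a')
        ((C.image (fun w => s(a, w))) ∪ (C.image (fun w => s(a', w)))) := by
      intro e he
      rw [hP, Finset.mem_filter] at he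
      obtain ⟨he1, z, hz, hze⟩ := he
      induction e with
      | _ x y =>
        have hadj : G.Adj x y := (SimpleGraph.mem_edgeFinset).mp he1
        -- helper: for endpoint z0 ∈ {a,a'} and other endpoint o with Adj z0 o and s(z0,o) = s(x,y) form
        have main : ∀ (z0 o : V), z0 ∈ ({a, a'} : Finset V) → G.Adj z0 o →
            s(z0, o) ∈ insert s(a, a')
              ((C.image (fun w => s(a, w))) ∪ (C.image (fun w => s(a', w)))) := by
          intro z0 o hz0 hadj0
          rcases hclose z0 hz0 o hadj0 with h | h
          · rw [Finset.mem_insert, Finset.mem_singleton] at hz0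
            rcases hz0 with rfl | rfl
            · exact Finset.mem_insert.mpr (Or.inr (Finset.mem_union_left _
                (Finset.mem_image.mpr ⟨o, h, rfl⟩)))
            · exact Finset.mem_insert.mpr (Or.inr (Finset.mem_union_right _
                (Finset.mem_image.mpr ⟨o, h, rfl⟩)))
          · -- o ∈ A, so edge = s(a,a')
            rw [Finset.mem_insert, Finset.mem_singleton] at hz0 h
            have hzo : z0 ≠ o := hadj0.ne
            apply Finset.mem_insert.mpr
            left
            rcases hz0 with rfl | rfl <;> rcases h with rfl | rfl
            · exact absurd rfl hzo
            · rfl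
            · exact Sym2.eq_swap
            · exact absurd rfl hzo
        rw [Sym2.mem_iff] at hze
        rcases hze with rfl | rfl
        · exact main _ _ hz hadj
        · have h5 := main _ _ hz hadj.symm
          rwa [show s(z, x) = s(x, z) from Sym2.eq_swap] at h5
    have hcard : P.card ≤ 2 * C.card + 1 := by
      calc P.card ≤ _ := Finset.card_le_card hPsub
        _ ≤ ((C.image (fun w => s(a, w))) ∪ (C.image (fun w => s(a', w)))).card + 1 :=
            Finset.card_insert_le _ _
        _ ≤ (C.image (fun w => s(a, w))).card + (C.image (fun w => s(a', w))).card + 1 :=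
            by have := Finset.card_union_le (C.image (fun w => s(a, w))) (C.image (fun w => s(a', w))); omega
        _ ≤ 2 * C.card + 1 := by
            have h1 : (C.image (fun w => s(a, w))).card ≤ C.card := Finset.card_image_le
            have h2 : (C.image (fun w => s(a', w))).card ≤ C.card := Finset.card_image_le
            omega
    omega


end Aux

theorem stmt8 {V : Type*} [Fintype V] (G : SimpleGraph V) (hG : G.Connected)
    (hn : 6 ≤ Fintype.card V) (k : ℕ) (hk : 3 ≤ k) (hk6 : k ≤ 6) :
    genKappa G k ≤ vertexConn G := by
  classical
  obtain ⟨v0⟩ : Nonempty V := Fintype.card_pos_iff.mp (by omega)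
  have hsetne : {m | ∃ Sf : Finset V, Sf.card = m ∧
      (¬ (G.induce ((↑Sf : Set V)ᶜ)).Connected ∨ Fintype.card V ≤ m + 1)}.Nonempty := by
    refine ⟨Fintype.card V - 1, Finset.univ.erase v0, ?_, Or.inr (by omega)⟩
    rw [Finset.card_erase_of_mem (Finset.mem_univ v0), Finset.card_univ]
  obtain ⟨C, hCcard, hCprop⟩ : ∃ Sf : Finset V, Sf.card = vertexConn G ∧
      (¬ (G.induce ((↑Sf : Set V)ᶜ)).Connected ∨ Fintype.card V ≤ vertexConn G + 1) :=
    Nat.sInf_mem hsetne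
  -- key reduction: enough to bound the number of trees for ONE good S
  have key : ∀ S : Finset V, S.card = k →
      (∀ (t : ℕ) (T : Fin t → G.Subgraph), (∀ i, IsSteinerTree G ↑S (T i)) →
        (∀ i j, i ≠ j → (T i).edgeSet ∩ (T j).edgeSet = ∅ ∧
          (T i).verts ∩ (T j).verts = ↑S) →
        t ≤ vertexConn G) →
      genKappa G k ≤ vertexConn G := by
    intro S hScard hbound
    have h1 : steinerKappa G ↑S ≤ vertexConn G := by
      apply csSup_le
      · exact ⟨0, Fin.elim0, fun i => i.elim0, fun i => i.elim0⟩
      · rintro n ⟨T, hT1, hT2⟩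
        exact hbound n T hT1 hT2
    calc genKappa G k ≤ steinerKappa G ↑S := by
          unfold genKappa
          rw [if_pos hG]
          exact Nat.sInf_le ⟨S, hScard, rfl⟩
      _ ≤ vertexConn G := h1
  -- the case where the vertex connectivity is nearly everything
  have caseBig : Fintype.card V ≤ vertexConn G + 1 → genKappa G k ≤ vertexConn G := by
    intro hbig
    obtain ⟨S, -, hScard⟩ := Finset.exists_subset_card_eq
      (show k ≤ (Finset.univ : Finset V).card by rw [Finset.card_univ]; omega)
    obtain ⟨a, ha⟩ : S.Nonempty := Finset.card_pos.mp (by omega)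
    apply key S hScard
    intro t T hT hdisj
    have hsmall := aux_smallSide (G := G) (Finset.univ.erase a) {a} S
      (by
        intro z hz w hadj
        rw [Finset.mem_singleton] at hz
        subst hz
        exact Or.inl (Finset.mem_erase.mpr ⟨hadj.ne', Finset.mem_univ w⟩))
      (Finset.singleton_subset_iff.mpr ha) ⟨a, Finset.mem_singleton_self a⟩ (by norm_num)
      (by rw [Finset.card_singleton, hScard]; omega)
      T hT (fun i j hij => (hdisj i j hij).1)
    have hcarde : (Finset.univ.erase a).card = Fintype.card V - 1 := by
      rw [Finset.card_erase_of_mem (Finset.mem_univ a), Finset.card_univ]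
    omega
  rcases hCprop with hdis | hbig
  · -- C is a genuine cut (or Cᶜ is empty)
    by_cases hne2 : ((↑C : Set V)ᶜ).Nonempty
    · have hnsub : Nonempty ↥((↑C : Set V)ᶜ) := hne2.to_subtype
      have hpre : ¬ (G.induce ((↑C : Set V)ᶜ)).Preconnected := by
        intro h
        exact hdis ⟨h⟩
      simp only [SimpleGraph.Preconnected, not_forall] at hpre
      obtain ⟨x, y, hxy⟩ := hpre
      set W : Set V := {z | ∃ p : G.Walk (↑x) z, ∀ v ∈ p.support, v ∉ (↑C : Set V)} with hW
      have haW : (↑x : V) ∈ W := ⟨SimpleGraph.Walk.nil, by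
        intro v hv
        rw [SimpleGraph.Walk.support_nil, List.mem_singleton] at hv
        subst hv
        exact x.2⟩
      have hWnotC : ∀ z ∈ W, z ∉ (↑C : Set V) := by
        rintro z ⟨p, hp⟩
        exact hp z p.end_mem_support
      have hWclose : ∀ z ∈ W, ∀ w, G.Adj z w → w ∉ (↑C : Set V) → w ∈ W := by
        rintro z ⟨p, hp⟩ w hadj hwC
        refine ⟨p.concat hadj, ?_⟩
        intro v hv
        rw [SimpleGraph.Walk.support_concat, List.mem_append,
          List.mem_singleton] at hv
        rcases hv with hv | rfl
        · exact hp v hv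
        · exact hwC
      have hbW : (↑y : V) ∉ W := by
        rintro ⟨p, hp⟩
        exact hxy (aux_reach_induce p hp x.2 y.2)
      have hbC : (↑y : V) ∈ ((↑C : Set V)ᶜ) := y.2
      set Wf : Finset V := (Set.toFinite W).toFinset with hWf
      set Xf : Finset V := (Set.toFinite (((↑C : Set V)ᶜ) \ W)).toFinset with hXf
      have haWf : (↑x : V) ∈ Wf := (Set.Finite.mem_toFinset _).mpr haW
      have hbXf : (↑y : V) ∈ Xf := (Set.Finite.mem_toFinset _).mpr ⟨hbC, hbW⟩
      have smallBranch : ∀ A : Finset V, A.Nonempty → A.card ≤ 2 →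
          (∀ z ∈ A, ∀ w, G.Adj z w → w ∈ C ∨ w ∈ A) → genKappa G k ≤ vertexConn G := by
        intro A hAne hA2 hclose
        obtain ⟨S, hAS, hScard⟩ := Finset.exists_superset_card_eq (s := A) (n := k)
          (by omega) (by omega)
        apply key S hScard
        intro t T hT hdisj
        have h := aux_smallSide C A S hclose hAS hAne hA2
          (show A.card < S.card by rw [hScard]; omega) T hT (fun i j hij => (hdisj i j hij).1)
        omega
      by_cases hW2 : Wf.card ≤ 2
      · apply smallBranch Wf ⟨_, haWf⟩ hW2
        intro z hz w hadj
        by_cases hwC : w ∈ C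
        · exact Or.inl hwC
        · refine Or.inr ((Set.Finite.mem_toFinset _).mpr ?_)
          exact hWclose z ((Set.Finite.mem_toFinset _).mp hz) w hadj
            (fun hc => hwC (Finset.mem_coe.mp hc))
      · by_cases hX2 : Xf.card ≤ 2
        · apply smallBranch Xf ⟨_, hbXf⟩ hX2
          intro z hz w hadj
          rw [Set.Finite.mem_toFinset] at hz
          by_cases hwC : w ∈ C
          · exact Or.inl hwC
          · have hwCc : w ∈ ((↑C : Set V)ᶜ) := fun hc => hwC (Finset.mem_coe.mp hc)
            refine Or.inr ((Set.Finite.mem_toFinset _).mpr ⟨hwCc, ?_⟩)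
            intro hwW
            exact hz.2 (hWclose w hwW z hadj.symm hz.1)
        · -- both sides have at least 3 vertices
          set Cfin : Finset V := (Set.toFinite ((↑C : Set V)ᶜ)).toFinset with hCfin
          have hWsub : Wf ⊆ Cfin := by
            intro z hz
            rw [Set.Finite.mem_toFinset] at hz ⊢
            exact hWnotC z hz
          have hXsub : Xf ⊆ Cfin := by
            intro z hz
            rw [Set.Finite.mem_toFinset] at hz ⊢
            exact hz.1
          have hdisjWX : Disjoint Wf Xf := by
            rw [Finset.disjoint_left]
            intro z hz1 hz2
            rw [Set.Finite.mem_toFinset] at hz1 hz2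
            exact hz2.2 hz1
          have hCfin6 : 6 ≤ Cfin.card := by
            have h1 : Wf ∪ Xf ⊆ Cfin := Finset.union_subset hWsub hXsub
            have h2 := Finset.card_le_card h1
            rw [Finset.card_union_of_disjoint hdisjWX] at h2
            omega
          have habs : ({(↑x : V), (↑y : V)} : Finset V) ⊆ Cfin := by
            intro z hz
            rw [Finset.mem_insert, Finset.mem_singleton] at hz
            rw [Set.Finite.mem_toFinset]
            rcases hz with rfl | rfl
            · exact x.2
            · exact y.2
          have hab_le : ({(↑x : V), (↑y : V)} : Finset V).card ≤ k := by
            have h1 := Finset.card_insert_le (↑x : V) ({(↑y : V)} : Finset V)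
            have h2 : ({(↑y : V)} : Finset V).card = 1 := Finset.card_singleton _
            omega
          obtain ⟨S, habS, hSsub, hScard⟩ := Finset.exists_subsuperset_card_eq habs
            hab_le (by omega)
          apply key S hScard
          intro t T hT hdisj
          have haS : (↑x : V) ∈ (↑S : Set V) :=
            Finset.mem_coe.mpr (habS (Finset.mem_insert_self _ _))
          have hbS : (↑y : V) ∈ (↑S : Set V) :=
            Finset.mem_coe.mpr (habS (Finset.mem_insert.mpr (Or.inr (Finset.mem_singleton_self _))))
          have hmeet : ∀ i : Fin t, ∃ c ∈ (↑C : Set V), c ∈ (T i).verts := fun i =>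
            aux_tree_meets_cut (hT i) hWclose haS hbS haW hbW
          choose f hf1 hf2 using hmeet
          have hinj : Set.InjOn f ↑(Finset.univ : Finset (Fin t)) := by
            intro i _ j _ hfeq
            by_contra hne3
            have hv := (hdisj i j hne3).2
            have hfi : f i ∈ (T i).verts ∩ (T j).verts := ⟨hf2 i, hfeq ▸ hf2 j⟩
            rw [hv] at hfi
            have : f i ∈ Cfin := hSsub (Finset.mem_coe.mp hfi)
            rw [Set.Finite.mem_toFinset] at this
            exact this (hf1 i)
          have hcard := Finset.card_le_card_of_injOn f
            (fun i _ => Finset.mem_coe.mp (hf1 i)) hinj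
          rw [Finset.card_univ, Fintype.card_fin] at hcard
          omega
    · -- Cᶜ is empty, so C is everything
      apply caseBig
      have huniv : (Finset.univ : Finset V) ⊆ C := by
        intro v _
        by_contra hv
        exact hne2 ⟨v, fun hc => hv (Finset.mem_coe.mp hc)⟩
      have := Finset.card_le_card huniv
      rw [Finset.card_univ] at this
      omega
  · exact caseBig hbig
end

section
/- If G is a cubic (3-regular) connected graph of order n, then κ_k(G) ≤ κ_{k−1}(G) for all 3 ≤ k ≤ n. -/
open SimpleGraph
open scoped Classical

section Aux
variable {W : Type*} {H : SimpleGraph W}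

/-- A path cannot pass through an interior vertex having at most one neighbor. -/
lemma no_interior {a b v : W} (p : H.Walk a b)
    (hp : p.IsPath) (hv : v ∈ p.support) (hva : v ≠ a) (hvb : v ≠ b)
    (huniq : ∀ x y, H.Adj v x → H.Adj v y → x = y) : False := by
  set q := p.takeUntil v hv with hq
  set r := p.dropUntil v hv with hr
  have hspec : q.append r = p := p.take_spec hv
  have hrnil : ¬ r.Nil := SimpleGraph.Walk.not_nil_of_ne hvb
  have hqrnil : ¬ q.reverse.Nil := SimpleGraph.Walk.not_nil_of_ne hva
  set u := q.reverse.getVert 1 with hu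
  set w := r.getVert 1 with hw
  have hadju : H.Adj v u := q.reverse.adj_snd hqrnil
  have hadjw : H.Adj v w := r.adj_snd hrnil
  have huw : u = w := huniq _ _ hadju hadjw
  have hus : u ∈ q.support := by
    have h1 : u ∈ q.reverse.tail.support := SimpleGraph.Walk.start_mem_support _
    have h2 : v :: q.reverse.tail.support = q.reverse.support :=
      SimpleGraph.Walk.cons_support_tail hqrnil
    have h3 : u ∈ q.reverse.support := by
      rw [← h2]; exact List.mem_cons_of_mem _ h1
    rwa [SimpleGraph.Walk.support_reverse, List.mem_reverse] at h3
  have hws : w ∈ r.support.tail := by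
    have h1 : w ∈ r.tail.support := SimpleGraph.Walk.start_mem_support _
    have h2 : v :: r.tail.support = r.support :=
      SimpleGraph.Walk.cons_support_tail hrnil
    rw [← h2]
    exact h1
  have hnodup := hp.support_nodup
  rw [← hspec, SimpleGraph.Walk.support_append, List.nodup_append] at hnodup
  exact hnodup.2.2 u hus u (huw ▸ hws) rfl

end Aux

section Aux2
variable {V : Type*} {G : SimpleGraph V}

/-- Walks in a subgraph avoiding `v` lift to the subgraph with `v` deleted. -/
lemma reach_del (T : G.Subgraph) (v : V) :
    ∀ {a b : T.verts} (p : T.coe.Walk a b), (∀ x ∈ p.support, (x : V) ≠ v) →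
    ∀ (ha : (a : V) ∈ (T.deleteVerts {v}).verts) (hb : (b : V) ∈ (T.deleteVerts {v}).verts),
    (T.deleteVerts {v}).coe.Reachable ⟨a, ha⟩ ⟨b, hb⟩ := by
  intro a b p
  induction p with
  | nil =>
    intro _ ha hb
    exact Reachable.refl _
  | @cons x y z h q ih =>
    intro hp ha hb
    have hyv : (y : V) ≠ v := hp y (by simp)
    have hy : (y : V) ∈ (T.deleteVerts {v}).verts := by
      simp only [SimpleGraph.Subgraph.deleteVerts_verts, Set.mem_diff, Set.mem_singleton_iff]
      exact ⟨y.2, hyv⟩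
    have hadj : (T.deleteVerts {v}).coe.Adj ⟨x, ha⟩ ⟨y, hy⟩ := by
      simp only [SimpleGraph.Subgraph.coe_adj]
      rw [SimpleGraph.Subgraph.deleteVerts_adj]
      refine ⟨x.2, ?_, y.2, ?_, ?_⟩
      · simpa using (hp x (by simp))
      · simpa using hyv
      · exact h
    exact hadj.reachable.trans (ih (fun c hc => hp c (by simp [hc])) hy hb)

/-- Deleting a vertex with at most one neighbor from a tree (with another vertex) is a tree. -/
lemma tree_deleteLeaf (T : G.Subgraph) (hT : T.coe.IsTree) {v : V} (hv : v ∈ T.verts)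
    (huniq : ∀ a b, T.Adj v a → T.Adj v b → a = b)
    {w : V} (hw : w ∈ T.verts) (hwv : w ≠ v) :
    (T.deleteVerts {v}).coe.IsTree := by
  have hdel := SimpleGraph.Subgraph.deleteVerts_le (G' := T) (s := {v})
  constructor
  · -- Connected
    rw [connected_iff]
    constructor
    · rintro ⟨x, hx⟩ ⟨y, hy⟩
      have hx' : x ∈ T.verts := hx.1
      have hy' : y ∈ T.verts := hy.1
      have hxv : x ≠ v := by simpa using hx.2
      have hyv : y ≠ v := by simpa using hy.2
      obtain ⟨p0⟩ := hT.isConnected.preconnected ⟨x, hx'⟩ ⟨y, hy'⟩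
      set p := p0.toPath with hp
      have huniq' : ∀ a b : T.verts, T.coe.Adj ⟨v, hv⟩ a → T.coe.Adj ⟨v, hv⟩ b → a = b := by
        intro a b ha hb
        exact Subtype.ext (huniq a b (by simpa using ha) (by simpa using hb))
      have hpavoid : ∀ c ∈ p.1.support, (c : V) ≠ v := by
        intro c hc hcv
        have hceq : c = ⟨v, hv⟩ := Subtype.ext hcv
        subst hceq
        refine no_interior p.1 p.2 hc ?_ ?_ huniq'
        · intro h; exact hxv (congrArg Subtype.val h).symm
        · intro h; exact hyv (congrArg Subtype.val h).symm
      exact reach_del T v p.1 hpavoid hx hy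
    · exact ⟨⟨w, ⟨hw, by simpa using hwv⟩⟩⟩
  · -- Acyclic
    intro x c hc
    have := hc.map (SimpleGraph.Subgraph.inclusion.injective hdel)
    exact hT.IsAcyclic _ this

end Aux2

section Main
variable {V : Type*} [Fintype V] {G : SimpleGraph V} [DecidableRel G.Adj]

/-- The defining set of `steinerKappa` is bounded by the degree of any vertex of `S`,
provided `S` has two elements. -/
lemma kset_bdd {S : Set V} {s t : V} (hs : s ∈ S) (ht : t ∈ S) (hst : s ≠ t) :
    {n | ∃ T : Fin n → G.Subgraph, (∀ i, IsSteinerTree G S (T i)) ∧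
      ∀ i j, i ≠ j → (T i).edgeSet ∩ (T j).edgeSet = ∅ ∧ (T i).verts ∩ (T j).verts = S} ⊆
    Set.Iic (G.degree s) := by
  rintro n ⟨T, hTree, hdisj⟩
  have hnbr : ∀ i, ∃ u, (T i).Adj s u := by
    intro i
    have hsm : s ∈ (T i).verts := (hTree i).1 hs
    have htm : t ∈ (T i).verts := (hTree i).1 ht
    obtain ⟨p⟩ := (hTree i).2.isConnected.preconnected ⟨s, hsm⟩ ⟨t, htm⟩
    have hnil : ¬ p.Nil :=
      SimpleGraph.Walk.not_nil_of_ne (fun h => hst (congrArg Subtype.val h))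
    exact ⟨(p.getVert 1 : V), by simpa using p.adj_snd hnil⟩
  have hmemn : ∀ i, (hnbr i).choose ∈ G.neighborFinset s := by
    intro i
    rw [SimpleGraph.mem_neighborFinset]
    exact (T i).adj_sub (hnbr i).choose_spec
  have hinj : Function.Injective (fun i => (⟨(hnbr i).choose, hmemn i⟩ :
      ↥(G.neighborFinset s))) := by
    intro i j hij
    by_contra hne
    have h1 : (hnbr i).choose = (hnbr j).choose := congrArg Subtype.val hij
    have he : s(s, (hnbr i).choose) ∈ (T i).edgeSet ∩ (T j).edgeSet := by
      constructor
      · exact (hnbr i).choose_spec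
      · rw [SimpleGraph.Subgraph.mem_edgeSet, h1]
        exact (hnbr j).choose_spec
    rw [(hdisj i j hne).1] at he
    exact he
  have hle := Fintype.card_le_of_injective _ hinj
  rw [Set.mem_Iic]
  calc n = Fintype.card (Fin n) := (Fintype.card_fin n).symm
    _ ≤ Fintype.card ↥(G.neighborFinset s) := hle
    _ = (G.neighborFinset s).card := Fintype.card_coe _
    _ = G.degree s := rfl

/-- Key transfer: internally disjoint Steiner trees for `insert v S` yield
internally disjoint Steiner trees for `S` in a cubic graph. -/
lemma kset_mono (hcubic : ∀ x : V, G.degree x = 3) {S : Set V} {v s : V}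
    (hv : v ∉ S) (hs : s ∈ S) {n : ℕ}
    (hn : n ∈ {n | ∃ T : Fin n → G.Subgraph, (∀ i, IsSteinerTree G (insert v S) (T i)) ∧
      ∀ i j, i ≠ j → (T i).edgeSet ∩ (T j).edgeSet = ∅ ∧
        (T i).verts ∩ (T j).verts = insert v S}) :
    n ∈ {n | ∃ T : Fin n → G.Subgraph, (∀ i, IsSteinerTree G S (T i)) ∧
      ∀ i j, i ≠ j → (T i).edgeSet ∩ (T j).edgeSet = ∅ ∧ (T i).verts ∩ (T j).verts = S} := by
  obtain ⟨T, hTree, hdisj⟩ := hn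
  have hsv : s ≠ v := fun h => hv (h ▸ hs)
  set P : Fin n → Prop := fun i => ∃ a b : V, a ≠ b ∧ (T i).Adj v a ∧ (T i).Adj v b with hPdef
  have hcross : ∀ i j, i ≠ j → ∀ x y, (T i).Adj v x → (T j).Adj v y → x ≠ y := by
    intro i j hij x y hx hy hxy
    have he : s(v, x) ∈ (T i).edgeSet ∩ (T j).edgeSet := by
      constructor
      · exact hx
      · rw [SimpleGraph.Subgraph.mem_edgeSet, hxy]
        exact hy
    rw [(hdisj i j hij).1] at he
    exact he
  have hP : ∀ i j, i ≠ j → P i → ¬ P j := by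
    rintro i j hij ⟨a, b, hab, ha, hb⟩ ⟨c, d, hcd, hc, hd⟩
    have hac := hcross i j hij a c ha hc
    have had := hcross i j hij a d ha hd
    have hbc := hcross i j hij b c hb hc
    have hbd := hcross i j hij b d hb hd
    have hsub : ({a, b, c, d} : Finset V) ⊆ G.neighborFinset v := by
      intro x hx
      rw [SimpleGraph.mem_neighborFinset]
      simp only [Finset.mem_insert, Finset.mem_singleton] at hx
      rcases hx with h | h | h | h
      · exact (T i).adj_sub (h ▸ ha)
      · exact (T i).adj_sub (h ▸ hb)
      · exact (T j).adj_sub (h ▸ hc)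
      · exact (T j).adj_sub (h ▸ hd)
    have hcard4 : ({a, b, c, d} : Finset V).card = 4 := by
      rw [Finset.card_insert_of_notMem (by simp [hab, hac, had]),
        Finset.card_insert_of_notMem (by simp [hbc, hbd]),
        Finset.card_insert_of_notMem (by simp [hcd]), Finset.card_singleton]
    have hle := Finset.card_le_card hsub
    rw [hcard4] at hle
    have : (G.neighborFinset v).card = 3 := by
      rw [SimpleGraph.card_neighborFinset_eq_degree]; exact hcubic v
    omega
  have hSsub : ∀ i, S ⊆ (T i).verts := fun i x hx => (hTree i).1 (Set.mem_insert_of_mem _ hx)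
  have hvmem : ∀ i, v ∈ (T i).verts := fun i => (hTree i).1 (Set.mem_insert _ _)
  obtain ⟨T', hT'⟩ : ∃ T' : Fin n → G.Subgraph,
      ∀ i, T' i = if P i then T i else (T i).deleteVerts {v} := ⟨_, fun i => rfl⟩
  have hvertsub : ∀ i, (T' i).verts ⊆ (T i).verts := by
    intro i
    by_cases h : P i <;> simp [hT' i, h, Set.diff_subset]
  have hedgesub : ∀ i, (T' i).edgeSet ⊆ (T i).edgeSet := by
    intro i
    by_cases h : P i
    · simp [hT' i, h]
    · rw [hT' i, if_neg h]
      exact SimpleGraph.Subgraph.edgeSet_mono (SimpleGraph.Subgraph.deleteVerts_le)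
  have hSsub' : ∀ i, S ⊆ (T' i).verts := by
    intro i x hx
    by_cases h : P i
    · rw [hT' i, if_pos h]; exact hSsub i hx
    · rw [hT' i, if_neg h]
      simp only [SimpleGraph.Subgraph.deleteVerts_verts, Set.mem_diff, Set.mem_singleton_iff]
      exact ⟨hSsub i hx, fun hxv => hv (hxv ▸ hx)⟩
  have hvnot : ∀ i, ¬ P i → v ∉ (T' i).verts := by
    intro i h
    rw [hT' i, if_neg h]
    simp
  refine ⟨T', fun i => ⟨hSsub' i, ?_⟩, fun i j hij => ⟨?_, ?_⟩⟩
  · -- tree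
    by_cases h : P i
    · rw [hT' i, if_pos h]
      exact (hTree i).2
    · rw [hT' i, if_neg h]
      refine tree_deleteLeaf (T i) (hTree i).2 (hvmem i) ?_ (hSsub i hs) hsv
      intro a b ha hb
      by_contra hne
      exact h ⟨a, b, hne, ha, hb⟩
  · -- edge disjoint
    have : (T' i).edgeSet ∩ (T' j).edgeSet ⊆ (T i).edgeSet ∩ (T j).edgeSet :=
      Set.inter_subset_inter (hedgesub i) (hedgesub j)
    rw [(hdisj i j hij).1] at this
    exact Set.eq_empty_iff_forall_notMem.mpr (fun e he => this he)
  · -- verts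
    apply Set.eq_of_subset_of_subset
    · intro x hx
      have hx' : x ∈ (T i).verts ∩ (T j).verts :=
        ⟨hvertsub i hx.1, hvertsub j hx.2⟩
      rw [(hdisj i j hij).2] at hx'
      rcases hx' with hxv | hxS
      · exfalso
        subst hxv
        by_cases hPi : P i
        · exact hvnot j (hP i j hij hPi) hx.2
        · exact hvnot i hPi hx.1
      · exact hxS
    · intro x hx
      exact ⟨hSsub' i hx, hSsub' j hx⟩

lemma kappa_insert_le (hcubic : ∀ x : V, G.degree x = 3) {S : Set V} {v s t : V}
    (hv : v ∉ S) (hs : s ∈ S) (ht : t ∈ S) (hst : s ≠ t) :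
    steinerKappa G (insert v S) ≤ steinerKappa G S := by
  apply csSup_le_csSup
  · exact ⟨G.degree s, fun n hn => kset_bdd hs ht hst hn⟩
  · exact ⟨0, Fin.elim0, fun i => i.elim0, fun i j _ => i.elim0⟩
  · intro n hn
    exact kset_mono hcubic hv hs hn

end Main

theorem stmt10 {V : Type*} [Fintype V] (G : SimpleGraph V) [DecidableRel G.Adj]
    (hG : G.Connected) (hcubic : ∀ v : V, G.degree v = 3) (k : ℕ)
    (hk : 3 ≤ k) (hkn : k ≤ Fintype.card V) :
    genKappa G k ≤ genKappa G (k - 1) := by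
  classical
  simp only [genKappa, if_pos hG]
  have hA : {m | ∃ S : Finset V, S.card = k - 1 ∧ steinerKappa G ↑S = m}.Nonempty := by
    obtain ⟨S, -, hS⟩ := Finset.exists_subset_card_eq
      (s := (Finset.univ : Finset V)) (n := k - 1)
      (by rw [Finset.card_univ]; omega)
    exact ⟨_, S, hS, rfl⟩
  obtain ⟨S₀, hScard, hSval⟩ := Nat.sInf_mem hA
  obtain ⟨v, hv⟩ : ∃ v, v ∉ S₀ := by
    by_contra h
    push_neg at h
    have huniv : S₀ = Finset.univ := Finset.eq_univ_iff_forall.mpr h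
    rw [huniv, Finset.card_univ] at hScard
    omega
  obtain ⟨s, hsS, t, htS, hst⟩ : ∃ s ∈ S₀, ∃ t ∈ S₀, s ≠ t :=
    Finset.one_lt_card.mp (by omega)
  have h1 : steinerKappa G ↑(insert v S₀) ≤ steinerKappa G ↑S₀ := by
    rw [Finset.coe_insert]
    exact kappa_insert_le hcubic (by simpa using hv) (Finset.mem_coe.mpr hsS)
      (Finset.mem_coe.mpr htS) hst
  have h2 : sInf {m | ∃ S : Finset V, S.card = k ∧ steinerKappa G ↑S = m} ≤
      steinerKappa G ↑(insert v S₀) :=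
    Nat.sInf_le ⟨insert v S₀, by rw [Finset.card_insert_of_notMem hv, hScard]; omega, rfl⟩
  calc sInf {m | ∃ S : Finset V, S.card = k ∧ steinerKappa G ↑S = m}
      ≤ steinerKappa G ↑(insert v S₀) := h2
    _ ≤ steinerKappa G ↑S₀ := h1
    _ = sInf {m | ∃ S : Finset V, S.card = k - 1 ∧ steinerKappa G ↑S = m} := hSval
end

section
/- Let G be a connected graph of order n with minimum degree δ. If G has two adjacent vertices both of degree δ, then λ_k(G) ≤ δ − 1 for every k with 3 ≤ k ≤ n. -/
open SimpleGraph
open scoped Classical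

lemma walk_boundary {W : Type*} {H : SimpleGraph W} {s : Set W} {a b : W}
    (p : H.Walk a b) (ha : a ∈ s) (hb : b ∉ s) :
    ∃ x y, H.Adj x y ∧ x ∈ s ∧ y ∉ s := by
  induction p with
  | nil => exact absurd ha hb
  | @cons a c b h q ih =>
    by_cases hc : c ∈ s
    · exact ih hc hb
    · exact ⟨a, c, h, ha, hc⟩

lemma tree_edge_at {V : Type*} {G : SimpleGraph V} {T : G.Subgraph}
    (hconn : T.coe.Preconnected) {x y : V} (hx : x ∈ T.verts) (hy : y ∈ T.verts)
    (hxy : x ≠ y) : ∃ z, T.Adj x z := by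
  obtain ⟨p⟩ := hconn ⟨x, hx⟩ ⟨y, hy⟩
  cases p with
  | nil => exact absurd rfl hxy
  | cons h q => exact ⟨_, by exact_mod_cast h⟩

lemma crossing_edge {V : Type*} {G : SimpleGraph V} {T : G.Subgraph}
    (hconn : T.coe.Preconnected) {u v w : V} (hu : u ∈ T.verts) (hw : w ∈ T.verts)
    (hwu : w ≠ u) (hwv : w ≠ v) :
    ∃ a b, T.Adj a b ∧ (a = u ∨ a = v) ∧ b ≠ u ∧ b ≠ v := by
  obtain ⟨p⟩ := hconn ⟨u, hu⟩ ⟨w, hw⟩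
  obtain ⟨x, y, hxy, hxs, hys⟩ :=
    walk_boundary (s := {z : T.verts | (z : V) = u ∨ (z : V) = v}) p (Or.inl rfl)
      (by simp [hwu, hwv])
  exact ⟨x, y, by exact_mod_cast hxy, hxs, by
    simpa using (not_or.1 hys).1, by simpa using (not_or.1 hys).2⟩

lemma key {V : Type*} [Fintype V] (G : SimpleGraph V) [DecidableRel G.Adj]
    {u v w : V} (huv : G.Adj u v) {S : Set V} (hu : u ∈ S) (hv : v ∈ S) (hw : w ∈ S)
    (hwu : w ≠ u) (hwv : w ≠ v)
    (hdu : G.degree u = G.minDegree) (hdv : G.degree v = G.minDegree) :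
    steinerLambda G S ≤ G.minDegree - 1 := by
  refine csSup_le ⟨0, ?_⟩ ?_
  · exact ⟨Fin.elim0, fun i => i.elim0, fun i j _ => i.elim0⟩
  rintro n ⟨T, hT, hdisj⟩
  set δ := G.minDegree with hδ
  set A := G.incidenceFinset u with hA
  set B := G.incidenceFinset v with hB
  have hAcard : A.card = δ := by rw [hA, G.card_incidenceFinset_eq_degree, hdu]
  have hBcard : B.card = δ := by rw [hB, G.card_incidenceFinset_eq_degree, hdv]
  have huvA : s(u, v) ∈ A := by
    rw [hA, G.mem_incidenceFinset]; exact G.mk'_mem_incidenceSet_left_iff.2 huv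
  have huvB : s(u, v) ∈ B := by
    rw [hB, G.mem_incidenceFinset]; exact G.mk'_mem_incidenceSet_right_iff.2 huv
  set pool := (A ∪ B).erase s(u, v) with hpooldef
  have hpool : pool.card + 2 ≤ δ + δ := by
    have h1 := Finset.card_union_add_card_inter A B
    have h2 : 0 < (A ∩ B).card :=
      Finset.card_pos.2 ⟨s(u, v), Finset.mem_inter.2 ⟨huvA, huvB⟩⟩
    have h3 : pool.card = (A ∪ B).card - 1 :=
      Finset.card_erase_of_mem (Finset.mem_union_left _ huvA)
    have h4 : 0 < (A ∪ B).card := Finset.card_pos.2 ⟨s(u, v), Finset.mem_union_left _ huvA⟩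
    omega
  set F : Fin n → Finset (Sym2 V) := fun i => pool.filter (· ∈ (T i).edgeSet) with hF
  have hFdisj : ∀ i j, i ≠ j → Disjoint (F i) (F j) := by
    intro i j hij
    rw [Finset.disjoint_left]
    intro e hei hej
    have he : e ∈ (T i).edgeSet ∩ (T j).edgeSet :=
      ⟨(Finset.mem_filter.1 hei).2, (Finset.mem_filter.1 hej).2⟩
    rw [hdisj i j hij] at he
    exact he
  have hsum : ∑ i, (F i).card ≤ pool.card := by
    rw [← Finset.card_biUnion (fun i _ j _ hij => hFdisj i j hij)]
    exact Finset.card_le_card (Finset.biUnion_subset.2 fun i _ => Finset.filter_subset _ _)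
  have hmemF : ∀ (i : Fin n) e, e ∈ (T i).edgeSet → e ∈ A ∪ B → e ≠ s(u, v) → e ∈ F i := by
    intro i e h1 h2 h3
    exact Finset.mem_filter.2 ⟨Finset.mem_erase.2 ⟨h3, h2⟩, h1⟩
  have htwo : ∀ i, s(u, v) ∉ (T i).edgeSet → 2 ≤ (F i).card := by
    intro i hne
    have hconn := (hT i).2.isConnected.preconnected
    have hu' : u ∈ (T i).verts := (hT i).1 hu
    have hv' : v ∈ (T i).verts := (hT i).1 hv
    obtain ⟨x, hx⟩ := tree_edge_at hconn hu' hv' huv.ne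
    obtain ⟨y, hy⟩ := tree_edge_at hconn hv' hu' huv.ne.symm
    have hxv : x ≠ v := fun h => hne (Subgraph.mem_edgeSet.2 (h ▸ hx))
    have hyu : y ≠ u := fun h => hne (Subgraph.mem_edgeSet.2 ((h ▸ hy) : (T i).Adj v u).symm)
    have he1 : s(u, x) ∈ F i := by
      refine hmemF i _ (Subgraph.mem_edgeSet.2 hx)
        (Finset.mem_union_left _ ?_) ?_
      · rw [hA, G.mem_incidenceFinset]
        exact G.mk'_mem_incidenceSet_left_iff.2 hx.adj_sub
      · intro h
        rw [Sym2.eq_iff] at h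
        rcases h with ⟨-, h⟩ | ⟨h, -⟩
        · exact hxv h
        · exact huv.ne h
    have he2 : s(v, y) ∈ F i := by
      refine hmemF i _ (Subgraph.mem_edgeSet.2 hy)
        (Finset.mem_union_right _ ?_) ?_
      · rw [hB, G.mem_incidenceFinset]
        exact G.mk'_mem_incidenceSet_left_iff.2 hy.adj_sub
      · intro h
        rw [Sym2.eq_iff] at h
        rcases h with ⟨h, -⟩ | ⟨-, h⟩
        · exact huv.ne h.symm
        · exact hyu h
    have hne12 : s(u, x) ≠ s(v, y) := by
      intro h
      rw [Sym2.eq_iff] at h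
      rcases h with ⟨h, -⟩ | ⟨-, h⟩
      · exact huv.ne h
      · exact hxv h
    exact Finset.one_lt_card.2 ⟨_, he1, _, he2, hne12⟩
  have hone : ∀ i, 1 ≤ (F i).card := by
    intro i
    by_cases hcase : s(u, v) ∈ (T i).edgeSet
    · have hconn := (hT i).2.isConnected.preconnected
      have hu' : u ∈ (T i).verts := (hT i).1 hu
      have hw' : w ∈ (T i).verts := (hT i).1 hw
      obtain ⟨a, b, hab, ha, hbu, hbv⟩ := crossing_edge hconn hu' hw' hwu hwv
      have heF : s(a, b) ∈ F i := by
        refine hmemF i _ (Subgraph.mem_edgeSet.2 hab) ?_ ?_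
        · rcases ha with h | h
          · subst h
            exact Finset.mem_union_left _ (by
              rw [hA, G.mem_incidenceFinset]
              exact G.mk'_mem_incidenceSet_left_iff.2 hab.adj_sub)
          · subst h
            exact Finset.mem_union_right _ (by
              rw [hB, G.mem_incidenceFinset]
              exact G.mk'_mem_incidenceSet_left_iff.2 hab.adj_sub)
        · intro h
          rw [Sym2.eq_iff] at h
          rcases h with ⟨-, h⟩ | ⟨-, h⟩
          · exact hbv h
          · exact hbu h
      exact Finset.card_pos.2 ⟨_, heF⟩
    · exact le_trans (by norm_num) (htwo i hcase)
  have hn : 2 * n ≤ pool.card + 1 := by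
    by_cases hex : ∃ i0, s(u, v) ∈ (T i0).edgeSet
    · obtain ⟨i0, hi0⟩ := hex
      have h1 : ∀ i ∈ Finset.univ.erase i0, 2 ≤ (F i).card := by
        intro i hi
        refine htwo i fun hmem => ?_
        have he : s(u, v) ∈ (T i).edgeSet ∩ (T i0).edgeSet := ⟨hmem, hi0⟩
        rw [hdisj i i0 (Finset.mem_erase.1 hi).1] at he
        exact he
      have h2 : ∑ i ∈ Finset.univ.erase i0, 2 ≤ ∑ i ∈ Finset.univ.erase i0, (F i).card :=
        Finset.sum_le_sum h1
      have h3 : (F i0).card + ∑ i ∈ Finset.univ.erase i0, (F i).card = ∑ i, (F i).card :=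
        Finset.add_sum_erase Finset.univ (fun i => (F i).card) (Finset.mem_univ i0)
      have h4 : (Finset.univ.erase i0).card = n - 1 := by
        rw [Finset.card_erase_of_mem (Finset.mem_univ i0)]
        simp
      rw [Finset.sum_const, h4, smul_eq_mul] at h2
      have h5 := hone i0
      have h6 : (1 : ℕ) ≤ n := Fin.pos i0
      omega
    · push_neg at hex
      have h1 : ∑ i : Fin n, 2 ≤ ∑ i, (F i).card :=
        Finset.sum_le_sum fun i _ => htwo i (hex i)
      rw [Finset.sum_const, smul_eq_mul] at h1
      simp only [Finset.card_univ, Fintype.card_fin] at h1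
      omega
  omega

theorem stmt11 {V : Type*} [Fintype V] [Nonempty V] (G : SimpleGraph V) [DecidableRel G.Adj]
    (hG : G.Connected)
    (hadj : ∃ u v : V, G.Adj u v ∧ G.degree u = G.minDegree ∧ G.degree v = G.minDegree)
    (k : ℕ) (hk : 3 ≤ k) (hkn : k ≤ Fintype.card V) :
    genLambda G k ≤ G.minDegree - 1 := by
  obtain ⟨u, v, huv, hdu, hdv⟩ := hadj
  have hcard2 : ({u, v} : Finset V).card = 2 := by
    rw [Finset.card_insert_of_notMem (by simp [huv.ne]), Finset.card_singleton]
  obtain ⟨S, hsub, -, hScard⟩ := Finset.exists_subsuperset_card_eq (n := k)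
    (Finset.subset_univ ({u, v} : Finset V)) (by rw [hcard2]; omega) (by simpa using hkn)
  have hSne : ¬ S ⊆ ({u, v} : Finset V) := fun h => by
    have := Finset.card_le_card h; omega
  obtain ⟨w, hwS, hw'⟩ := Finset.not_subset.1 hSne
  simp only [Finset.mem_insert, Finset.mem_singleton, not_or] at hw'
  have huS : u ∈ (S : Set V) := hsub (Finset.mem_insert_self u {v})
  have hvS : v ∈ (S : Set V) := hsub (by simp)
  unfold genLambda
  rw [if_pos hG]
  exact le_trans (Nat.sInf_le ⟨S, hScard, rfl⟩)
    (key G huv huS hvS (by exact_mod_cast hwS) hw'.1 hw'.2 hdu hdv)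
end
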